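/- arXiv:1711.11088 — 6 statements merged into one kernel-verified Lean document; each statement's English description precedes it below -/
import Mathlib

section
/- If ψ : ℝⁿ → ℝ is a convex function such that ∫ e^{-ψ(x)} dx < ∞, then there exist γ > 0 and β ∈ ℝ such that ψ(x) ≥ γ‖x‖ + β for all x ∈ ℝⁿ. -/
open MeasureTheory Metric

/-- If `ψ : ℝⁿ → ℝ` is convex with `∫ e^{-ψ} dx < ∞`, then there are `γ > 0` and `β ∈ ℝ`
with `ψ x ≥ γ‖x‖ + β` for all `x`. -/
theorem exists_linear_lower_bound_of_integrable
    (n : ℕ) (ψ : EuclideanSpace ℝ (Fin n) → ℝ)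
    (hconv : ConvexOn ℝ Set.univ ψ)
    (hint : Integrable (fun x => Real.exp (-ψ x))) :
    ∃ γ : ℝ, 0 < γ ∧ ∃ β : ℝ, ∀ x, γ * ‖x‖ + β ≤ ψ x := by
  have hcont : Continuous ψ := by
    rw [← continuousOn_univ]
    exact hconv.continuousOn isOpen_univ
  set c : ℝ := ψ 0 + 1 with hc
  set K : Set (EuclideanSpace ℝ (Fin n)) := {x | ψ x ≤ c} with hKdef
  -- K has finite measure
  have hKfin : volume K < ⊤ := by
    have h1 : volume {a : EuclideanSpace ℝ (Fin n) | Real.exp (-c) ≤ Real.exp (-ψ a)} < ⊤ :=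
      hint.measure_ge_lt_top (Real.exp_pos _)
    refine lt_of_le_of_lt (measure_mono ?_) h1
    intro x hx
    exact Real.exp_le_exp.2 (neg_le_neg hx)
  -- a small ball around 0 inside K
  obtain ⟨δ, hδpos, hδ⟩ : ∃ δ > 0, ball (0 : EuclideanSpace ℝ (Fin n)) δ ⊆ K := by
    have : {x | ψ x < c} ∈ nhds (0 : EuclideanSpace ℝ (Fin n)) := by
      apply (isOpen_lt hcont continuous_const).mem_nhds
      simp [hc]
    obtain ⟨δ, hδpos, hball⟩ := Metric.mem_nhds_iff.1 this
    refine ⟨δ, hδpos, fun x hx => ?_⟩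
    have : ψ x < c := hball hx
    simp only [hKdef, Set.mem_setOf_eq]
    exact this.le
  -- K is bounded
  have hbdd : ∃ R : ℝ, 0 ≤ R ∧ ∀ x ∈ K, ‖x‖ ≤ R := by
    by_contra hcon
    push_neg at hcon
    set v : ENNReal := volume (ball (0 : EuclideanSpace ℝ (Fin n)) (δ / 2)) with hv
    have hv0 : v ≠ 0 := (measure_ball_pos volume 0 (by linarith)).ne'
    have hvtop : v ≠ ⊤ := measure_ball_lt_top.ne
    obtain ⟨M, hM⟩ := ENNReal.exists_nat_gt (ENNReal.div_lt_top hKfin.ne hv0).ne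
    have hMK : volume K < M * v := by
      rwa [ENNReal.div_lt_iff (Or.inl hv0) (Or.inl hvtop)] at hM
    obtain ⟨x, hxK, hxnorm⟩ := hcon (2 * δ * M) (by positivity)
    have hx0 : 0 < ‖x‖ := lt_of_le_of_lt (by positivity) hxnorm
    set u : EuclideanSpace ℝ (Fin n) := ‖x‖⁻¹ • x with hu
    have hunorm : ‖u‖ = 1 := by
      rw [hu, norm_smul, norm_inv, norm_norm, inv_mul_cancel₀ hx0.ne']
    -- each ball around (j*δ)•u of radius δ/2 lies in K
    have hsub : ∀ j : ℕ, j < M → ball (((j : ℝ) * δ) • u) (δ / 2) ⊆ K := by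
      intro j hj y hy
      set t : ℝ := (j : ℝ) * δ / ‖x‖ with ht
      have htnn : 0 ≤ t := by positivity
      have hjd : (j : ℝ) * δ ≤ ‖x‖ / 2 := by
        have : (j : ℝ) ≤ M := Nat.cast_le.2 hj.le
        nlinarith
      have hthalf : t ≤ 1 / 2 := by
        rw [ht, div_le_div_iff₀ hx0 (by norm_num)]
        linarith
      have hcen : (((j : ℝ) * δ) • u) = t • x := by
        rw [hu, ht, smul_smul, div_eq_mul_inv]
      set z : EuclideanSpace ℝ (Fin n) := y - t • x with hz
      have hznorm : ‖z‖ < δ / 2 := by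
        rw [hz]
        have := mem_ball_iff_norm.1 hy
        rwa [hcen] at this
      set w : EuclideanSpace ℝ (Fin n) := (1 - t)⁻¹ • z with hw
      have h1t : (0:ℝ) < 1 - t := by linarith
      have hwnorm : ‖w‖ < δ := by
        rw [hw, norm_smul, norm_inv, Real.norm_eq_abs, abs_of_pos h1t]
        rw [inv_mul_lt_iff₀ h1t]
        nlinarith
      have hwK : ψ w ≤ c := hδ (mem_ball_zero_iff.2 hwnorm)
      have hyw : y = t • x + (1 - t) • w := by
        rw [hw, smul_smul, mul_inv_cancel₀ h1t.ne', one_smul, hz]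
        abel
      have hcvx := hconv.2 (Set.mem_univ x) (Set.mem_univ w) htnn h1t.le
        (by ring : t + (1 - t) = 1)
      rw [← hyw] at hcvx
      have hψx : ψ x ≤ c := hxK
      calc ψ y ≤ t * ψ x + (1 - t) * ψ w := hcvx
        _ ≤ t * c + (1 - t) * c := by
            have := mul_le_mul_of_nonneg_left hψx htnn
            have := mul_le_mul_of_nonneg_left hwK h1t.le
            linarith
        _ = c := by ring
    -- the balls are pairwise disjoint
    have hdisj : (↑(Finset.range M) : Set ℕ).PairwiseDisjoint
        (fun j : ℕ => ball (((j : ℝ) * δ) • u) (δ / 2)) := by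
      intro i _ j _ hij
      apply ball_disjoint_ball
      rw [dist_eq_norm, ← sub_smul, norm_smul, hunorm, mul_one, Real.norm_eq_abs]
      have h1 : (1:ℝ) ≤ |(i : ℝ) - (j : ℝ)| := by
        rcases hij.lt_or_gt with h | h
        · have h' : (i:ℝ) + 1 ≤ j := by exact_mod_cast h
          rw [abs_sub_comm, abs_of_pos (by linarith)]
          linarith
        · have h' : (j:ℝ) + 1 ≤ i := by exact_mod_cast h
          rw [abs_of_pos (by linarith)]
          linarith
      have h2 : |(i:ℝ) * δ - (j:ℝ) * δ| = |(i:ℝ) - (j:ℝ)| * δ := by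
        rw [show (i:ℝ)*δ - (j:ℝ)*δ = ((i:ℝ)-(j:ℝ))*δ by ring, abs_mul, abs_of_pos hδpos]
      rw [h2]
      nlinarith
    have hsum : (M : ENNReal) * v ≤ volume K := by
      have hμ : volume (⋃ j ∈ Finset.range M, ball (((j : ℝ) * δ) • u) (δ / 2))
          = ∑ j ∈ Finset.range M, volume (ball (((j : ℝ) * δ) • u) (δ / 2)) :=
        measure_biUnion_finset hdisj (fun j _ => measurableSet_ball)
      have hval : ∀ j : ℕ, volume (ball (((j : ℝ) * δ) • u) (δ / 2)) = v := fun j =>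
        Measure.addHaar_ball_center volume _ _
      have hsc : ∑ j ∈ Finset.range M, volume (ball (((j : ℝ) * δ) • u) (δ / 2))
          = (M : ENNReal) * v := by
        rw [Finset.sum_congr rfl (fun j _ => hval j), Finset.sum_const, Finset.card_range,
          nsmul_eq_mul]
      calc (M : ENNReal) * v = ∑ j ∈ Finset.range M, volume (ball (((j : ℝ) * δ) • u) (δ / 2)) :=
            hsc.symm
        _ = volume (⋃ j ∈ Finset.range M, ball (((j : ℝ) * δ) • u) (δ / 2)) := hμ.symm
        _ ≤ volume K := by
            apply measure_mono
            exact Set.iUnion₂_subset fun j hj => hsub j (Finset.mem_range.1 hj)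
    exact absurd hMK (not_lt.2 hsum)
  obtain ⟨R, hR0, hR⟩ := hbdd
  set R' : ℝ := R + 1 with hR'
  have hR'pos : 0 < R' := by linarith
  -- ψ bounded below on the closed ball of radius R'
  obtain ⟨x₀, _, hx₀min⟩ := (isCompact_closedBall (0 : EuclideanSpace ℝ (Fin n)) R').exists_isMinOn
    ⟨0, mem_closedBall_self hR'pos.le⟩ hcont.continuousOn
  set m : ℝ := ψ x₀ with hm
  refine ⟨1 / R', by positivity, min (ψ 0) (m - 1), ?_⟩
  intro x
  rcases le_or_gt ‖x‖ R' with hle | hgt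
  · have hmx : m ≤ ψ x := hx₀min (by simpa [mem_closedBall, dist_zero_right] using hle)
    have h1 : 1 / R' * ‖x‖ ≤ 1 := by
      rw [div_mul_eq_mul_div, one_mul, div_le_one hR'pos]
      exact hle
    have h2 : min (ψ 0) (m - 1) ≤ m - 1 := min_le_right _ _
    linarith
  · set t : ℝ := R' / ‖x‖ with ht
    have hxpos : 0 < ‖x‖ := lt_trans hR'pos hgt
    have ht0 : 0 < t := by positivity
    have ht1 : t < 1 := (div_lt_one hxpos).2 hgt
    have hpnorm : ‖t • x‖ = R' := by
      rw [norm_smul, Real.norm_eq_abs, abs_of_pos ht0, ht, div_mul_cancel₀ _ hxpos.ne']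
    have hpK : ¬ (ψ (t • x) ≤ c) := by
      intro h
      have := hR _ h
      rw [hpnorm] at this
      linarith
    push_neg at hpK
    have hcvx := hconv.2 (Set.mem_univ x) (Set.mem_univ (0 : EuclideanSpace ℝ (Fin n)))
      ht0.le (by linarith : (0:ℝ) ≤ 1 - t) (by ring : t + (1 - t) = 1)
    rw [smul_zero, add_zero] at hcvx
    -- t * ψ x + (1-t) * ψ 0 ≥ ψ (t•x) > c = ψ 0 + 1
    have key : t * ψ x > t * ψ 0 + 1 := by
      have : ψ (t • x) ≤ t * ψ x + (1 - t) * ψ 0 := hcvx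
      rw [hc] at hpK
      nlinarith
    have hψx : ψ 0 + 1 / t ≤ ψ x := by
      have h3 : t * (ψ 0 + 1 / t) ≤ t * ψ x := by
        rw [mul_add, mul_one_div, div_self ht0.ne']
        linarith
      exact le_of_mul_le_mul_left h3 ht0
    have hti : 1 / t = ‖x‖ / R' := by
      rw [ht, one_div, inv_div]
    have hmin : min (ψ 0) (m - 1) ≤ ψ 0 := min_le_left _ _
    have : 1 / R' * ‖x‖ = ‖x‖ / R' := by ring
    linarith [hψx, hti ▸ hψx]
end

section
/- If ψ : ℝⁿ → ℝ is convex with 0 < ∫ e^{-ψ(x)} dx < ∞, then ψ(x) → ∞ as ‖x‖ → ∞ (ψ is coercive). -/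
open MeasureTheory Filter Topology

/-- If `ψ : ℝⁿ → ℝ` is convex with `0 < ∫ e^{-ψ} dx < ∞`, then `ψ(x) → ∞` as `‖x‖ → ∞`. -/
theorem coercive_of_integrable
    (n : ℕ) (ψ : EuclideanSpace ℝ (Fin n) → ℝ)
    (hconv : ConvexOn ℝ Set.univ ψ)
    (hint : Integrable (fun x => Real.exp (-ψ x)))
    (hpos : 0 < ∫ x, Real.exp (-ψ x)) :
    Tendsto ψ (cocompact (EuclideanSpace ℝ (Fin n))) atTop := by
  rcases Nat.eq_zero_or_pos n with hn | hn
  · subst hn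
    haveI : Subsingleton (EuclideanSpace ℝ (Fin 0)) := by
      constructor; intro a b; ext i; exact absurd i.2 (by omega)
    haveI : Finite (EuclideanSpace ℝ (Fin 0)) := Finite.of_subsingleton
    haveI : CompactSpace (EuclideanSpace ℝ (Fin 0)) := Finite.compactSpace
    rw [Filter.cocompact_eq_bot]
    exact tendsto_bot
  have hcont : Continuous ψ := by
    rw [← continuousOn_univ]
    exact hconv.continuousOn isOpen_univ
  by_contra hco
  rw [tendsto_atTop] at hco
  push_neg at hco
  obtain ⟨M, hM⟩ := hco
  -- a sequence with large norm and ψ < M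
  have hseq : ∀ k : ℕ, ∃ x : EuclideanSpace ℝ (Fin n), (k : ℝ) < ‖x‖ ∧ ψ x < M := by
    intro k
    have hmem : (Metric.closedBall (0 : EuclideanSpace ℝ (Fin n)) k)ᶜ ∈ cocompact (EuclideanSpace ℝ (Fin n)) :=
      (isCompact_closedBall (0 : EuclideanSpace ℝ (Fin n)) k).compl_mem_cocompact
    obtain ⟨x, hx1, hx2⟩ := (hM.and_eventually (eventually_of_mem hmem fun x hx => hx)).exists
    refine ⟨x, ?_, hx1⟩
    simpa [Metric.mem_closedBall, dist_zero_right, not_le] using hx2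
  choose x hxn hxM using hseq
  have hxpos : ∀ k, 0 < ‖x k‖ := fun k => lt_of_le_of_lt (Nat.cast_nonneg k) (hxn k)
  set d : ℕ → EuclideanSpace ℝ (Fin n) := fun k => ‖x k‖⁻¹ • x k with hd
  have hdmem : ∀ k, d k ∈ Metric.sphere (0 : EuclideanSpace ℝ (Fin n)) 1 := by
    intro k
    simp [hd, mem_sphere_zero_iff_norm, norm_smul, abs_of_nonneg (le_of_lt (inv_pos.mpr (hxpos k))),
      inv_mul_cancel₀ (ne_of_gt (hxpos k))]
  obtain ⟨v, hv, φ, hφ, hφtend⟩ := (isCompact_sphere (0 : EuclideanSpace ℝ (Fin n)) 1).tendsto_subseq hdmem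
  have hvnorm : ‖v‖ = 1 := mem_sphere_zero_iff_norm.mp hv
  set M' : ℝ := max M (ψ 0) with hM'
  -- ψ is bounded by M' on the ray through v
  have hray : ∀ t : ℝ, 0 ≤ t → ψ (t • v) ≤ M' := by
    intro t ht
    have htend : Tendsto (fun k => ψ (t • d (φ k))) atTop (𝓝 (ψ (t • v))) :=
      (hcont.tendsto _).comp (tendsto_const_nhds.smul hφtend)
    refine le_of_tendsto htend ?_
    filter_upwards [eventually_ge_atTop ⌈t⌉₊] with k hk
    have hnorm : t ≤ ‖x (φ k)‖ := by
      calc t ≤ (⌈t⌉₊ : ℝ) := Nat.le_ceil t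
        _ ≤ (k : ℝ) := by exact_mod_cast hk
        _ ≤ (φ k : ℝ) := by exact_mod_cast hφ.le_apply
        _ ≤ ‖x (φ k)‖ := (hxn (φ k)).le
    set a : ℝ := t / ‖x (φ k)‖ with ha
    have ha0 : 0 ≤ a := div_nonneg ht (norm_nonneg _)
    have ha1 : a ≤ 1 := div_le_one_of_le₀ hnorm (norm_nonneg _)
    have hb0 : 0 ≤ 1 - a := by linarith
    have key := hconv.2 (Set.mem_univ (x (φ k))) (Set.mem_univ (0 : EuclideanSpace ℝ (Fin n))) ha0 hb0 (by ring)
    have heq : a • x (φ k) + (1 - a) • (0 : EuclideanSpace ℝ (Fin n)) = t • d (φ k) := by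
      simp only [smul_zero, add_zero, hd, smul_smul, ha]
      rw [div_eq_mul_inv]
    rw [heq] at key
    rw [smul_eq_mul, smul_eq_mul] at key
    calc ψ (t • d (φ k)) ≤ a * ψ (x (φ k)) + (1 - a) * ψ 0 := key
      _ ≤ a * M + (1 - a) * ψ 0 := by nlinarith [(hxM (φ k)).le]
      _ ≤ a * M' + (1 - a) * M' := by
          gcongr <;> simp [hM', le_max_left, le_max_right]
      _ = M' := by ring
  -- ψ is bounded near 0
  obtain ⟨δ, hδ0, hδ⟩ := Metric.continuousAt_iff.mp hcont.continuousAt 1 one_pos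
  set r : ℝ := δ / 2 with hr
  have hr0 : 0 < r := by positivity
  have hball : ∀ y ∈ Metric.closedBall (0 : EuclideanSpace ℝ (Fin n)) r, ψ y ≤ ψ 0 + 1 := by
    intro y hy
    have : dist y (0 : EuclideanSpace ℝ (Fin n)) < δ := lt_of_le_of_lt (Metric.mem_closedBall.mp hy) (by linarith)
    have := hδ this
    rw [Real.dist_eq, abs_sub_lt_iff] at this
    linarith [this.1]
  set B : ℝ := max M' (ψ 0 + 1) with hB
  -- ψ ≤ B on each ball along the ray
  have hcyl : ∀ t : ℝ, 0 ≤ t → ∀ q ∈ Metric.closedBall (t • v) (r / 2), ψ q ≤ B := by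
    intro t ht q hq
    set a : EuclideanSpace ℝ (Fin n) := (2 : ℝ) • q - (2 : ℝ) • (t • v) with haa
    set b : EuclideanSpace ℝ (Fin n) := (2 * t) • v with hbb
    have hmid : (1 / 2 : ℝ) • a + (1 / 2 : ℝ) • b = q := by
      simp only [haa, hbb, smul_sub, smul_smul]
      module
    have haball : a ∈ Metric.closedBall (0 : EuclideanSpace ℝ (Fin n)) r := by
      rw [Metric.mem_closedBall, dist_zero_right, haa, ← smul_sub, norm_smul]
      have := Metric.mem_closedBall.mp hq
      rw [dist_eq_norm] at this
      rw [Real.norm_ofNat]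
      linarith
    have hψa : ψ a ≤ B := le_trans (hball a haball) (le_max_right _ _)
    have hψb : ψ b ≤ B := by
      refine le_trans (hray (2 * t) (by linarith)) (le_max_left _ _)
    have key := hconv.2 (Set.mem_univ a) (Set.mem_univ b)
      (by norm_num : (0:ℝ) ≤ 1/2) (by norm_num : (0:ℝ) ≤ 1/2) (by norm_num)
    rw [hmid] at key
    rw [smul_eq_mul, smul_eq_mul] at key
    calc ψ q ≤ (1/2) * ψ a + (1/2) * ψ b := key
      _ ≤ (1/2) * B + (1/2) * B := by gcongr
      _ = B := by ring
  -- the union of disjoint balls has infinite measure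
  set c : ℕ → EuclideanSpace ℝ (Fin n) := fun k => ((2 * r * k : ℝ)) • v with hc
  set S : Set (EuclideanSpace ℝ (Fin n)) := ⋃ k, Metric.closedBall (c k) (r / 2) with hS
  have hSmeas : ∀ k : ℕ, MeasurableSet (Metric.closedBall (c k) (r / 2)) :=
    fun k => Metric.isClosed_closedBall.measurableSet
  have hdisj : Pairwise (Function.onFun Disjoint fun k => Metric.closedBall (c k) (r / 2)) := by
    intro j k hjk
    refine Metric.closedBall_disjoint_closedBall ?_
    have : dist (c j) (c k) = 2 * r * |(j : ℝ) - k| := by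
      rw [hc, dist_eq_norm, ← sub_smul, norm_smul, hvnorm, mul_one, Real.norm_eq_abs,
        ← mul_sub, abs_mul]
      rw [abs_of_pos (by linarith : (0:ℝ) < 2 * r)]
    rw [this]
    have h1 : (1 : ℝ) ≤ |(j : ℝ) - k| := by
      have : (j : ℤ) ≠ (k : ℤ) := by exact_mod_cast hjk
      have := Int.one_le_abs (sub_ne_zero.mpr this)
      calc (1:ℝ) ≤ |((j : ℤ) - k : ℤ)| := by exact_mod_cast this
        _ = |(j : ℝ) - k| := by push_cast; ring_nf
    nlinarith
  have hm0 : 0 < volume (Metric.closedBall (0 : EuclideanSpace ℝ (Fin n)) (r / 2)) := by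
    refine lt_of_lt_of_le ?_ (measure_mono Metric.ball_subset_closedBall)
    exact Metric.measure_ball_pos volume 0 (by positivity)
  have hmeasS : volume S = ⊤ := by
    rw [hS, measure_iUnion hdisj hSmeas]
    have hvol : ∀ k : ℕ, volume (Metric.closedBall (c k) (r / 2)) =
        volume (Metric.closedBall (0 : EuclideanSpace ℝ (Fin n)) (r / 2)) := fun k =>
      MeasureTheory.Measure.addHaar_closedBall_center volume (c k) (r / 2)
    rw [tsum_congr hvol]
    exact ENNReal.tsum_const_eq_top_of_ne_zero hm0.ne'
  -- ψ ≤ B on S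
  have hSB : ∀ q ∈ S, ψ q ≤ B := by
    intro q hq
    rw [hS, Set.mem_iUnion] at hq
    obtain ⟨k, hk⟩ := hq
    exact hcyl (2 * r * k) (by positivity) q hk
  -- contradiction with integrability
  have hfin := hint.2
  rw [HasFiniteIntegral] at hfin
  have hlow : ENNReal.ofReal (Real.exp (-B)) * volume S ≤
      ∫⁻ a, (‖Real.exp (-ψ a)‖₊ : ENNReal) := by
    calc ENNReal.ofReal (Real.exp (-B)) * volume S
        = ∫⁻ _ in S, ENNReal.ofReal (Real.exp (-B)) := (setLIntegral_const S _).symm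
      _ ≤ ∫⁻ a in S, (‖Real.exp (-ψ a)‖₊ : ENNReal) := by
          refine setLIntegral_mono (by fun_prop) ?_
          intro q hq
          rw [← enorm_eq_nnnorm, Real.enorm_eq_ofReal (Real.exp_nonneg _)]
          exact ENNReal.ofReal_le_ofReal (Real.exp_le_exp.mpr (by linarith [hSB q hq]))
      _ ≤ ∫⁻ a, (‖Real.exp (-ψ a)‖₊ : ENNReal) := setLIntegral_le_lintegral S _
  rw [hmeasS, ENNReal.mul_top (by simp [Real.exp_pos])] at hlow
  exact hfin.ne (top_le_iff.mp hlow)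
end

section
/- For a one-variable convex function g : ℝ → ℝ with e^{-g} integrable, if m ∈ ℝ is a point where g attains its minimum, then ∫_{ℝ} e^{-g(t)} |g'(t)| dt = 2 e^{-g(m)}. -/
open MeasureTheory


open MeasureTheory Set Filter

namespace ExpDerivAux

/-- Right derivative of a convex function exists everywhere. -/
lemma hasRightDeriv {g : ℝ → ℝ} (hconv : ConvexOn ℝ Set.univ g) (x : ℝ) :
    HasDerivWithinAt g (derivWithin g (Set.Ioi x) x) (Set.Ioi x) x := by
  have hmono : MonotoneOn (slope g x) (Set.Ioi x) := by
    intro a ha b hb hab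
    simp only [slope_def_field]
    exact hconv.secant_mono trivial trivial trivial (ne_of_gt ha) (ne_of_gt hb) hab
  have hbdd : BddBelow (slope g x '' Set.Ioi x) := by
    refine ⟨slope g x (x - 1), ?_⟩
    rintro z ⟨y, hy, rfl⟩
    simp only [slope_def_field]
    exact hconv.secant_mono trivial trivial trivial (by norm_num) (ne_of_gt hy)
      (by linarith [mem_Ioi.1 hy])
  have htend := hmono.tendsto_nhdsGT hbdd
  have hD : HasDerivWithinAt g (sInf (slope g x '' Set.Ioi x)) (Set.Ioi x) x :=
    (hasDerivWithinAt_iff_tendsto_slope' (Set.notMem_Ioi_self)).2 htend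
  rwa [hD.derivWithin (uniqueDiffWithinAt_Ioi x)]

lemma slope_tendsto {g : ℝ → ℝ} (hconv : ConvexOn ℝ Set.univ g) (x : ℝ) :
    Filter.Tendsto (slope g x) (nhdsWithin x (Set.Ioi x))
      (nhds (derivWithin g (Set.Ioi x) x)) :=
  (hasDerivWithinAt_iff_tendsto_slope' (Set.notMem_Ioi_self)).1 (hasRightDeriv hconv x)

lemma slope_le_rightDeriv {g : ℝ → ℝ} (hconv : ConvexOn ℝ Set.univ g) {x y : ℝ} (hxy : y < x) :
    slope g y x ≤ derivWithin g (Set.Ioi x) x := by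
  refine ge_of_tendsto (slope_tendsto hconv x) ?_
  filter_upwards [self_mem_nhdsWithin] with z hz
  rw [slope_comm]
  simp only [slope_def_field]
  exact hconv.secant_mono trivial trivial trivial (ne_of_lt hxy) (ne_of_gt hz)
    (by linarith [mem_Ioi.1 hz])

lemma rightDeriv_mono {g : ℝ → ℝ} (hconv : ConvexOn ℝ Set.univ g) :
    Monotone (fun x => derivWithin g (Set.Ioi x) x) := by
  intro x y hxy
  rcases eq_or_lt_of_le hxy with rfl | h
  · exact le_refl _
  show derivWithin g (Set.Ioi x) x ≤ derivWithin g (Set.Ioi y) y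
  calc derivWithin g (Set.Ioi x) x ≤ slope g x y :=
        hconv.rightDeriv_le_slope trivial trivial h (hasRightDeriv hconv x).differentiableWithinAt
    _ ≤ derivWithin g (Set.Ioi y) y := slope_le_rightDeriv hconv h

end ExpDerivAux
namespace ExpDerivAux

variable {g : ℝ → ℝ} {m : ℝ}

lemma mono_right (hconv : ConvexOn ℝ Set.univ g) (hm : ∀ t, g m ≤ g t)
    {a b : ℝ} (hma : m ≤ a) (hab : a ≤ b) : g a ≤ g b := by
  rcases eq_or_lt_of_le hma with rfl | hma
  · exact hm b
  rcases eq_or_lt_of_le hab with rfl | hab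
  · exact le_refl _
  have hsec := hconv.secant_mono (a := a) trivial trivial trivial (ne_of_lt hma) (ne_of_gt hab)
    (le_of_lt (lt_trans hma hab))
  have h1 : (0:ℝ) ≤ (g m - g a) / (m - a) :=
    div_nonneg_iff.mpr (Or.inr ⟨by linarith [hm a], by linarith⟩)
  have h3 : (0:ℝ) ≤ (g b - g a) / (b - a) := le_trans h1 hsec
  rcases div_nonneg_iff.mp h3 with ⟨h4, _⟩ | ⟨_, h5⟩
  · linarith
  · linarith

lemma mono_left (hconv : ConvexOn ℝ Set.univ g) (hm : ∀ t, g m ≤ g t)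
    {a b : ℝ} (hbm : b ≤ m) (hab : a ≤ b) : g b ≤ g a := by
  rcases eq_or_lt_of_le hbm with rfl | hbm
  · exact hm a
  rcases eq_or_lt_of_le hab with rfl | hab
  · exact le_refl _
  have hsec := hconv.secant_mono (a := b) trivial trivial trivial (ne_of_lt hab) (ne_of_gt hbm)
    (le_of_lt (lt_trans hab hbm))
  have h1 : (g m - g b) / (m - b) ≤ 0 :=
    div_nonpos_iff.mpr (Or.inr ⟨by linarith [hm b], by linarith⟩)
  have h3 : (g a - g b) / (a - b) ≤ 0 := le_trans hsec h1
  rcases div_nonpos_iff.mp h3 with ⟨_, h4⟩ | ⟨_, h5⟩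
  · linarith
  · linarith

lemma rightDeriv_nonneg (hconv : ConvexOn ℝ Set.univ g) (hm : ∀ t, g m ≤ g t)
    {x : ℝ} (hx : m ≤ x) : 0 ≤ derivWithin g (Set.Ioi x) x := by
  refine ge_of_tendsto (slope_tendsto hconv x) ?_
  filter_upwards [self_mem_nhdsWithin] with z hz
  have hz' : x < z := hz
  have hgz : g x ≤ g z := mono_right hconv hm hx (le_of_lt hz')
  rw [slope_def_field]
  exact div_nonneg (by linarith) (by linarith)

lemma rightDeriv_nonpos (hconv : ConvexOn ℝ Set.univ g) (hm : ∀ t, g m ≤ g t)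
    {x : ℝ} (hx : x < m) : derivWithin g (Set.Ioi x) x ≤ 0 := by
  have h := hconv.rightDeriv_le_slope (x := x) (y := m) trivial trivial hx
    (hasRightDeriv hconv x).differentiableWithinAt
  refine le_trans h ?_
  rw [slope_def_field]
  exact div_nonpos_iff.mpr (Or.inr ⟨by linarith [hm x], by linarith⟩)

end ExpDerivAux

open Set Filter ExpDerivAux

/-- For a convex `g : ℝ → ℝ` with `e^{-g}` integrable and a minimizer `m` of `g`,
`∫ e^{-g(t)} |g'(t)| dt = 2 e^{-g(m)}`. -/
theorem integral_exp_mul_abs_deriv_eq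
    (g : ℝ → ℝ)
    (hconv : ConvexOn ℝ Set.univ g)
    (hint : Integrable (fun t => Real.exp (-g t)))
    (m : ℝ) (hm : ∀ t, g m ≤ g t) :
    ∫ t, Real.exp (-g t) * |deriv g t| = 2 * Real.exp (-g m) := by
  classical
  set φ : ℝ → ℝ := fun t => derivWithin g (Set.Ioi t) t with hφ
  set h : ℝ → ℝ := fun t => Real.exp (-g t) with hh
  set E : ℝ → ℝ := fun t => h t * φ t with hE
  have hpos : ∀ t, 0 < h t := fun t => Real.exp_pos _
  have hcont : Continuous g := by
    rw [← continuousOn_univ]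
    exact ConvexOn.continuousOn isOpen_univ hconv
  have hconth : Continuous h := Real.continuous_exp.comp hcont.neg
  -- derivative of -h
  have hderivf : ∀ x : ℝ, HasDerivWithinAt (fun t => -h t) (E x) (Set.Ioi x) x := by
    intro x
    have h1 : HasDerivAt (fun u : ℝ => -Real.exp (-u)) (Real.exp (-g x)) (g x) := by
      have h0 := (Real.hasDerivAt_exp (-g x)).comp (g x) ((hasDerivAt_id (g x)).neg)
      simpa [Function.comp_def, Pi.neg_def] using h0.neg
    have h2 := h1.comp_hasDerivWithinAt x (hasRightDeriv hconv x)
    simpa [hE, hh, hφ, Function.comp_def, mul_comm] using h2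
  have hEint : ∀ a b : ℝ, IntervalIntegrable E volume a b := by
    intro a b
    have h1 : IntervalIntegrable φ volume a b :=
      ((rightDeriv_mono hconv).monotoneOn _).intervalIntegrable
    exact h1.continuousOn_mul hconth.continuousOn
  have ftc : ∀ a b : ℝ, a ≤ b → ∫ t in a..b, E t = h a - h b := by
    intro a b hab
    have h1 := intervalIntegral.integral_eq_sub_of_hasDeriv_right_of_le hab
      (hconth.neg.continuousOn) (fun x _ => hderivf x) (hEint a b)
    rw [h1]; simp only [Pi.neg_apply]; ring
  -- tail limits
  have tendsto_top : Tendsto h atTop (nhds 0) := by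
    have Hanti : Antitone (fun t => h (max t m)) := by
      intro s t hst
      exact Real.exp_le_exp.mpr (neg_le_neg
        (mono_right hconv hm (le_max_right s m) (max_le_max hst (le_refl m))))
    have hbdd : BddBelow (Set.range fun t => h (max t m)) :=
      ⟨0, by rintro z ⟨t, rfl⟩; exact (hpos _).le⟩
    have hlim := tendsto_atTop_ciInf Hanti hbdd
    have hc0 : (⨅ t : ℝ, h (max t m)) = 0 := by
      by_contra hc
      have hcpos : 0 < ⨅ t : ℝ, h (max t m) :=
        lt_of_le_of_ne (le_ciInf fun t => (hpos _).le) (Ne.symm hc)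
      have hconst : Integrable (fun _ : ℝ => ⨅ t : ℝ, h (max t m))
          (volume.restrict (Set.Ici m)) := by
        refine Integrable.mono' hint.integrableOn aestronglyMeasurable_const ?_
        filter_upwards [ae_restrict_mem measurableSet_Ici] with x hx
        rw [Real.norm_eq_abs, abs_of_pos hcpos]
        have h2 := ciInf_le hbdd x
        rwa [max_eq_left hx] at h2
      rw [integrable_const_iff] at hconst
      rcases hconst with hc' | hfin
      · exact hcpos.ne' hc'
      · have hfin := hfin.measure_univ_lt_top
        rw [Measure.restrict_apply_univ, Real.volume_Ici] at hfin
        exact (lt_irrefl _ hfin)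
    rw [hc0] at hlim
    refine hlim.congr' ?_
    filter_upwards [eventually_ge_atTop m] with t ht
    rw [max_eq_left ht]
  have tendsto_bot : Tendsto h atBot (nhds 0) := by
    have Hmono : Monotone (fun t => h (min t m)) := by
      intro s t hst
      exact Real.exp_le_exp.mpr (neg_le_neg
        (mono_left hconv hm (min_le_right t m) (min_le_min hst (le_refl m))))
    have hbdd : BddBelow (Set.range fun t => h (min t m)) :=
      ⟨0, by rintro z ⟨t, rfl⟩; exact (hpos _).le⟩
    have hlim := tendsto_atBot_ciInf Hmono hbdd
    have hc0 : (⨅ t : ℝ, h (min t m)) = 0 := by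
      by_contra hc
      have hcpos : 0 < ⨅ t : ℝ, h (min t m) :=
        lt_of_le_of_ne (le_ciInf fun t => (hpos _).le) (Ne.symm hc)
      have hconst : Integrable (fun _ : ℝ => ⨅ t : ℝ, h (min t m))
          (volume.restrict (Set.Iic m)) := by
        refine Integrable.mono' hint.integrableOn aestronglyMeasurable_const ?_
        filter_upwards [ae_restrict_mem measurableSet_Iic] with x hx
        rw [Real.norm_eq_abs, abs_of_pos hcpos]
        have h2 := ciInf_le hbdd x
        rwa [min_eq_left hx] at h2
      rw [integrable_const_iff] at hconst
      rcases hconst with hc' | hfin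
      · exact hcpos.ne' hc'
      · have hfin := hfin.measure_univ_lt_top
        rw [Measure.restrict_apply_univ, Real.volume_Iic] at hfin
        exact (lt_irrefl _ hfin)
    rw [hc0] at hlim
    refine hlim.congr' ?_
    filter_upwards [eventually_le_atBot m] with t ht
    rw [min_eq_left ht]
  -- right-hand side integral
  have hEnn : ∀ x, m ≤ x → 0 ≤ E x := fun x hx =>
    mul_nonneg (hpos x).le (rightDeriv_nonneg hconv hm hx)
  have hEnp : ∀ x, x < m → E x ≤ 0 := fun x hx =>
    mul_nonpos_iff.mpr (Or.inl ⟨(hpos x).le, rightDeriv_nonpos hconv hm hx⟩)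
  have hnormtop : Tendsto (fun b => ∫ x in m..b, ‖E x‖) atTop (nhds (h m)) := by
    have key : ∀ b, m ≤ b → (∫ x in m..b, ‖E x‖) = h m - h b := by
      intro b hb
      rw [intervalIntegral.integral_congr (g := E)
        (fun x hx => Real.norm_of_nonneg (hEnn x ((Set.uIcc_of_le hb ▸ hx).1))), ftc m b hb]
    have h2 : Tendsto (fun b => h m - h b) atTop (nhds (h m)) := by
      simpa using tendsto_const_nhds.sub tendsto_top
    refine h2.congr' ?_
    filter_upwards [eventually_ge_atTop m] with b hb
    exact (key b hb).symm
  have hEIoi : IntegrableOn E (Set.Ioi m) :=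
    integrableOn_Ioi_of_intervalIntegral_norm_tendsto (h m) m
      (fun b => (hEint m b).1) tendsto_id hnormtop
  have hintIoi : ∫ x in Set.Ioi m, E x = h m := by
    refine tendsto_nhds_unique (intervalIntegral_tendsto_integral_Ioi m hEIoi tendsto_id) ?_
    have h2 : Tendsto (fun b => h m - h b) atTop (nhds (h m)) := by
      simpa using tendsto_const_nhds.sub tendsto_top
    refine h2.congr' ?_
    filter_upwards [eventually_ge_atTop m] with b hb
    exact (ftc m b hb).symm
  -- left-hand side integral
  have hne : ∀ᵐ x : ℝ, x ≠ m := by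
    rw [ae_iff]
    simp [measure_singleton (α := ℝ) m]
  have hnormbot : Tendsto (fun a => ∫ x in a..m, ‖E x‖) atBot (nhds (h m)) := by
    have key : ∀ a, a ≤ m → (∫ x in a..m, ‖E x‖) = h m - h a := by
      intro a ha
      have h3 : (∫ x in a..m, ‖E x‖) = ∫ x in a..m, -E x := by
        refine intervalIntegral.integral_congr_ae ?_
        filter_upwards [hne] with x hx hmem
        rw [Set.uIoc_of_le ha] at hmem
        rw [Real.norm_eq_abs]
        exact abs_of_nonpos (hEnp x (lt_of_le_of_ne hmem.2 hx))
      rw [h3, intervalIntegral.integral_neg, ftc a m ha]; ring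
    have h2 : Tendsto (fun a => h m - h a) atBot (nhds (h m)) := by
      simpa using tendsto_const_nhds.sub tendsto_bot
    refine h2.congr' ?_
    filter_upwards [eventually_le_atBot m] with a ha
    exact (key a ha).symm
  have hEIic : IntegrableOn E (Set.Iic m) :=
    integrableOn_Iic_of_intervalIntegral_norm_tendsto (h m) m
      (fun a => (hEint a m).1) tendsto_id hnormbot
  have hintIic : ∫ x in Set.Iic m, E x = -h m := by
    refine tendsto_nhds_unique (intervalIntegral_tendsto_integral_Iic m hEIic tendsto_id) ?_
    have h2 : Tendsto (fun a => h a - h m) atBot (nhds (-h m)) := by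
      simpa using tendsto_bot.sub (tendsto_const_nhds (x := h m))
    refine h2.congr' ?_
    filter_upwards [eventually_le_atBot m] with a ha
    exact (ftc a m ha).symm
  -- a.e. differentiability
  have hdiff_gt : ∀ᵐ t : ℝ, m < t → DifferentiableAt ℝ g t := by
    have hG : Monotone (fun t => g (max t m)) := fun s t hst =>
      mono_right hconv hm (le_max_right s m) (max_le_max hst (le_refl m))
    filter_upwards [hG.ae_differentiableAt] with t hdt ht
    have hev : (fun s => g (max s m)) =ᶠ[nhds t] g := by
      filter_upwards [eventually_gt_nhds ht] with s hs
      rw [max_eq_left hs.le]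
    exact (Filter.EventuallyEq.differentiableAt_iff hev).mp hdt
  have hdiff_lt : ∀ᵐ t : ℝ, t < m → DifferentiableAt ℝ g t := by
    have hG : Monotone (fun t => -g (min t m)) := fun s t hst =>
      neg_le_neg (mono_left hconv hm (min_le_right t m) (min_le_min hst (le_refl m)))
    filter_upwards [hG.ae_differentiableAt] with t hdt ht
    have hev : (fun s => -g (min s m)) =ᶠ[nhds t] (fun s => -g s) := by
      filter_upwards [eventually_lt_nhds ht] with s hs
      rw [min_eq_left hs.le]
    have h2 : DifferentiableAt ℝ (fun s => -g s) t :=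
      (Filter.EventuallyEq.differentiableAt_iff hev).mp hdt
    simpa using h2.neg
  -- identification of the integrand
  have hFIoi_eq : (fun t => Real.exp (-g t) * |deriv g t|)
      =ᶠ[ae (volume.restrict (Set.Ioi m))] E := by
    filter_upwards [ae_restrict_of_ae hdiff_gt, ae_restrict_mem measurableSet_Ioi]
      with t hdt ht
    have hd := hdt ht
    have heq : φ t = deriv g t :=
      hd.hasDerivAt.hasDerivWithinAt.derivWithin (uniqueDiffWithinAt_Ioi t)
    show Real.exp (-g t) * |deriv g t| = h t * φ t
    rw [heq, abs_of_nonneg (heq ▸ rightDeriv_nonneg hconv hm (le_of_lt ht))]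
  have hFIic_eq : (fun t => Real.exp (-g t) * |deriv g t|)
      =ᶠ[ae (volume.restrict (Set.Iic m))] (fun t => -E t) := by
    filter_upwards [ae_restrict_of_ae hdiff_lt, ae_restrict_of_ae hne,
      ae_restrict_mem measurableSet_Iic] with t hdt hnem ht
    have htm : t < m := lt_of_le_of_ne ht hnem
    have hd := hdt htm
    have heq : φ t = deriv g t :=
      hd.hasDerivAt.hasDerivWithinAt.derivWithin (uniqueDiffWithinAt_Ioi t)
    show Real.exp (-g t) * |deriv g t| = -(h t * φ t)
    rw [heq, abs_of_nonpos (heq ▸ rightDeriv_nonpos hconv hm htm)]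
    ring
  have hFIoi : IntegrableOn (fun t => Real.exp (-g t) * |deriv g t|) (Set.Ioi m) :=
    hEIoi.congr hFIoi_eq.symm
  have hFIic : IntegrableOn (fun t => Real.exp (-g t) * |deriv g t|) (Set.Iic m) :=
    hEIic.neg.congr hFIic_eq.symm
  have htotal := intervalIntegral.integral_Iic_add_Ioi (f := fun t => Real.exp (-g t) * |deriv g t|)
    hFIic hFIoi
  rw [← htotal, MeasureTheory.integral_congr_ae hFIoi_eq,
    MeasureTheory.integral_congr_ae hFIic_eq, hintIoi, MeasureTheory.integral_neg, hintIic]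
  show -(-h m) + h m = 2 * h m
  ring
end

section
/- Let ℰ = {x ∈ ℝⁿ : Σᵢ (xᵢ/aᵢ)² ≤ 1} be an ellipsoid with semi-axes a₁,…,aₙ > 0, and for 0 < h ≤ aₙ let H_h⁻ = {x : xₙ ≥ aₙ - h}. Then vol_n(ℰ ∩ H_h⁻) ≤ (2^{(n+1)/2} vol_{n-1}(B₂^{n-1}) ∏_{i=1}^{n-1} aᵢ / ((n+1) aₙ^{(n-1)/2})) · h^{(n+1)/2}. -/
open MeasureTheory Finset

lemma pi_ellipsoid_volume (m : ℕ) (b : Fin m → ℝ) (hb : ∀ i, 0 < b i) (c : ℝ) (hc : 0 ≤ c) :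
    volume {y : Fin m → ℝ | ∑ i, (y i / b i) ^ 2 ≤ c}
      = ENNReal.ofReal ((∏ i, b i) * Real.sqrt c ^ m) *
        volume (Metric.ball (0 : EuclideanSpace ℝ (Fin m)) 1) := by
  have hbne : ∀ i, b i ≠ 0 := fun i => (hb i).ne'
  set D : (Fin m → ℝ) →ₗ[ℝ] (Fin m → ℝ) := Matrix.toLin' (Matrix.diagonal fun i => (b i)⁻¹)
  have hdet : LinearMap.det D = ∏ i, (b i)⁻¹ := by
    simp [D, LinearMap.det_toLin', Matrix.det_diagonal]
  have hdet0 : LinearMap.det D ≠ 0 := by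
    rw [hdet]
    exact Finset.prod_ne_zero_iff.2 fun i _ => inv_ne_zero (hbne i)
  have hset : {y : Fin m → ℝ | ∑ i, (y i / b i) ^ 2 ≤ c}
      = D ⁻¹' {z : Fin m → ℝ | ∑ i, z i ^ 2 ≤ c} := by
    ext y
    simp only [Set.mem_setOf_eq, Set.mem_preimage, D, Matrix.toLin'_apply,
      Matrix.mulVec_diagonal]
    congr! 2 with i
    rw [div_eq_inv_mul]
  have hset2 : {z : Fin m → ℝ | ∑ i, z i ^ 2 ≤ c}
      = ((MeasurableEquiv.toLp 2 (Fin m → ℝ)).symm).symm ⁻¹'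
          (Metric.closedBall (0 : EuclideanSpace ℝ (Fin m)) (Real.sqrt c)) := by
    ext z
    have hz : (((MeasurableEquiv.toLp 2 (Fin m → ℝ)).symm).symm z : EuclideanSpace ℝ (Fin m))
        = WithLp.toLp 2 z := rfl
    simp only [Set.mem_setOf_eq, Set.mem_preimage, Metric.mem_closedBall, dist_zero_right, hz,
      EuclideanSpace.norm_eq, PiLp.toLp_apply, Real.norm_eq_abs, sq_abs]
    rw [Real.sqrt_le_sqrt_iff hc]
  rw [hset, MeasureTheory.Measure.addHaar_preimage_linearMap volume hdet0, hset2,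
    ((EuclideanSpace.volume_preserving_symm_measurableEquiv_toLp (Fin m)).symm).measure_preimage
      measurableSet_closedBall.nullMeasurableSet,
    Measure.addHaar_closedBall volume _ (Real.sqrt_nonneg c)]
  have habs : |(LinearMap.det D)⁻¹| = ∏ i, b i := by
    rw [hdet, ← Finset.prod_inv_distrib]
    simp only [inv_inv]
    exact abs_of_pos (Finset.prod_pos fun i _ => hb i)
  rw [habs, finrank_euclideanSpace_fin, ← mul_assoc,
    ← ENNReal.ofReal_mul (Finset.prod_pos fun i _ => hb i).le]

/-- Upper bound for the volume of a cap of an ellipsoid with semi-axes `a 0, …, a (n-1)`,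
cut off by the hyperplane `xₙ = aₙ - h`. -/
theorem ellipsoid_cap_volume_upper_bound
    (n : ℕ) (hn : 0 < n) (a : Fin n → ℝ) (ha : ∀ i, 0 < a i)
    (h : ℝ) (hh0 : 0 < h) (hha : h ≤ a ⟨n - 1, by omega⟩) :
    volume ({x : EuclideanSpace ℝ (Fin n) | ∑ i, (x i / a i) ^ 2 ≤ 1} ∩
        {x : EuclideanSpace ℝ (Fin n) | a ⟨n - 1, by omega⟩ - h ≤ x ⟨n - 1, by omega⟩})
      ≤ ENNReal.ofReal
        ((2 : ℝ) ^ (((n : ℝ) + 1) / 2) *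
          (volume (Metric.ball (0 : EuclideanSpace ℝ (Fin (n - 1))) 1)).toReal *
          (∏ i ∈ Finset.univ.erase (⟨n - 1, by omega⟩ : Fin n), a i) /
            (((n : ℝ) + 1) * a ⟨n - 1, by omega⟩ ^ (((n : ℝ) - 1) / 2)) *
          h ^ (((n : ℝ) + 1) / 2)) := by
  obtain ⟨m, rfl⟩ : ∃ m, n = m + 1 := ⟨n - 1, by omega⟩
  have hidx : (⟨m + 1 - 1, by omega⟩ : Fin (m + 1)) = Fin.last m := rfl
  have hidx2 : (⟨m, by omega⟩ : Fin (m + 1)) = Fin.last m := rfl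
  simp only [hidx, hidx2, Nat.add_sub_cancel] at hha ⊢
  set A := a (Fin.last m) with hA
  have hA0 : 0 < A := ha _
  set b : Fin m → ℝ := fun j => a (j.castSucc) with hbdef
  have hb0 : ∀ j, 0 < b j := fun j => ha _
  set Bvol := volume (Metric.ball (0 : EuclideanSpace ℝ (Fin m)) 1) with hBvol
  set T : Set (ℝ × (Fin m → ℝ)) :=
    {p | p.1 ∈ Set.Icc (A - h) A ∧ ∑ j, (p.2 j / b j) ^ 2 ≤ 2 * (A - p.1) / A} with hTdef
  have hTmeas : MeasurableSet T := by
    have : T = (Prod.fst ⁻¹' Set.Icc (A - h) A) ∩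
        {p : ℝ × (Fin m → ℝ) | ∑ j, (p.2 j / b j) ^ 2 ≤ 2 * (A - p.1) / A} := rfl
    rw [this]
    refine (measurableSet_Icc.preimage measurable_fst).inter (measurableSet_le ?_ ?_)
    · fun_prop
    · fun_prop
  set φ : EuclideanSpace ℝ (Fin (m + 1)) → ℝ × (Fin m → ℝ) :=
    (MeasurableEquiv.piFinSuccAbove (fun _ : Fin (m + 1) => ℝ) (Fin.last m)) ∘
      ((MeasurableEquiv.toLp 2 (Fin (m + 1) → ℝ)).symm) with hφdef
  have hφ : MeasurePreserving φ volume volume :=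
    (volume_preserving_piFinSuccAbove (fun _ : Fin (m + 1) => ℝ) (Fin.last m)).comp
      (EuclideanSpace.volume_preserving_symm_measurableEquiv_toLp (Fin (m + 1)))
  have hφx : ∀ x : EuclideanSpace ℝ (Fin (m + 1)),
      φ x = (x (Fin.last m), fun j => x (j.castSucc)) := by
    intro x
    have hsa : (Fin.last m).succAbove = Fin.castSucc := Fin.succAbove_last
    simp [hφdef, MeasurableEquiv.piFinSuccAbove, Fin.removeNth, hsa]
    exact rfl
  -- inclusion of the cap into φ ⁻¹' T
  have hsub : ({x : EuclideanSpace ℝ (Fin (m + 1)) | ∑ i, (x i / a i) ^ 2 ≤ 1} ∩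
      {x : EuclideanSpace ℝ (Fin (m + 1)) | A - h ≤ x (Fin.last m)}) ⊆ φ ⁻¹' T := by
    rintro x ⟨hx1, hx2⟩
    simp only [Set.mem_setOf_eq] at hx1 hx2
    have hsplit : ∑ i, (x i / a i) ^ 2
        = (∑ j : Fin m, (x (j.castSucc) / b j) ^ 2) + (x (Fin.last m) / A) ^ 2 := by
      rw [Fin.sum_univ_castSucc (f := fun i => (x i / a i) ^ 2)]
    have hrest : 0 ≤ ∑ j : Fin m, (x (j.castSucc) / b j) ^ 2 :=
      Finset.sum_nonneg fun j _ => sq_nonneg _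
    have hlast_sq : (x (Fin.last m) / A) ^ 2 ≤ 1 := by
      rw [hsplit] at hx1; linarith
    have hdiv : x (Fin.last m) / A ≤ 1 := by nlinarith [hlast_sq]
    have hxle : x (Fin.last m) ≤ A := by
      rwa [div_le_one hA0] at hdiv
    simp only [Set.mem_preimage, hφx x, hTdef, Set.mem_setOf_eq, Set.mem_Icc]
    refine ⟨⟨hx2, hxle⟩, ?_⟩
    have key : 1 - (x (Fin.last m) / A) ^ 2 ≤ 2 * (A - x (Fin.last m)) / A := by
      have h2 : 2 * (A - x (Fin.last m)) / A = 2 * (1 - x (Fin.last m) / A) := by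
        field_simp
      rw [h2]
      nlinarith [sq_nonneg (1 - x (Fin.last m) / A)]
    rw [hsplit] at hx1
    linarith
  have hBfin : Bvol ≠ ⊤ := measure_ball_lt_top.ne
  set C : ℝ := ∏ j, b j with hC
  have hC0 : 0 < C := Finset.prod_pos fun j _ => hb0 j
  -- slice computation
  have hslice : ∀ t : ℝ, volume (Prod.mk t ⁻¹' T)
      = Set.indicator (Set.Icc (A - h) A)
          (fun t => ENNReal.ofReal (C * Real.sqrt (2 * (A - t) / A) ^ m) * Bvol) t := by
    intro t
    by_cases ht : t ∈ Set.Icc (A - h) A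
    · rw [Set.indicator_of_mem ht]
      have hpre : Prod.mk t ⁻¹' T = {y : Fin m → ℝ | ∑ j, (y j / b j) ^ 2 ≤ 2 * (A - t) / A} := by
        ext y
        simp only [Set.mem_preimage, hTdef, Set.mem_setOf_eq]
        exact and_iff_right ht
      rw [hpre, pi_ellipsoid_volume m b hb0 _
        (div_nonneg (by linarith [ht.2]) hA0.le)]
    · rw [Set.indicator_of_notMem ht]
      have hpre : Prod.mk t ⁻¹' T = ∅ := by
        ext y
        simp only [Set.mem_preimage, hTdef, Set.mem_setOf_eq, Set.mem_empty_iff_false, iff_false]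
        exact fun hc => ht hc.1
      rw [hpre, measure_empty]
  have hg : Continuous fun t : ℝ => C * Real.sqrt (2 * (A - t) / A) ^ m := by fun_prop
  -- main calc up to a real integral
  have hmain : volume ({x : EuclideanSpace ℝ (Fin (m + 1)) | ∑ i, (x i / a i) ^ 2 ≤ 1} ∩
      {x : EuclideanSpace ℝ (Fin (m + 1)) | A - h ≤ x (Fin.last m)})
      ≤ ENNReal.ofReal (∫ t in Set.Icc (A - h) A, C * Real.sqrt (2 * (A - t) / A) ^ m) * Bvol := by
    calc volume _ ≤ volume (φ ⁻¹' T) := measure_mono hsub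
      _ = volume T := hφ.measure_preimage hTmeas.nullMeasurableSet
      _ = ∫⁻ t, volume (Prod.mk t ⁻¹' T) := by
          rw [Measure.volume_eq_prod, Measure.prod_apply hTmeas]
      _ = ∫⁻ t in Set.Icc (A - h) A,
            ENNReal.ofReal (C * Real.sqrt (2 * (A - t) / A) ^ m) * Bvol := by
          simp only [hslice]
          rw [lintegral_indicator measurableSet_Icc]
      _ = (∫⁻ t in Set.Icc (A - h) A,
            ENNReal.ofReal (C * Real.sqrt (2 * (A - t) / A) ^ m)) * Bvol := by
          rw [lintegral_mul_const _ hg.measurable.ennreal_ofReal]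
      _ = ENNReal.ofReal (∫ t in Set.Icc (A - h) A, C * Real.sqrt (2 * (A - t) / A) ^ m) * Bvol := by
          rw [← ofReal_integral_eq_lintegral_ofReal hg.integrableOn_Icc
            (Filter.Eventually.of_forall fun t => by positivity)]
  refine hmain.trans ?_
  -- compute the integral
  set p : ℝ := (m : ℝ) / 2 with hp
  have hp0 : 0 ≤ p := by positivity
  have hintval : ∫ t in Set.Icc (A - h) A, C * Real.sqrt (2 * (A - t) / A) ^ m
      = C * (Real.sqrt (2 / A) ^ m * (h ^ (p + 1) / (p + 1))) := by
    rw [MeasureTheory.integral_Icc_eq_integral_Ioc,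
      ← intervalIntegral.integral_of_le (by linarith : A - h ≤ A),
      intervalIntegral.integral_const_mul]
    have hcomp : ∫ t in (A - h)..A, Real.sqrt (2 * (A - t) / A) ^ m
        = ∫ u in (A - A)..(A - (A - h)), Real.sqrt (2 * u / A) ^ m :=
      intervalIntegral.integral_comp_sub_left (fun u => Real.sqrt (2 * u / A) ^ m) A
    rw [hcomp]
    simp only [sub_self, sub_sub_cancel]
    have hcong : ∫ u in (0:ℝ)..h, Real.sqrt (2 * u / A) ^ m
        = ∫ u in (0:ℝ)..h, Real.sqrt (2 / A) ^ m * u ^ p := by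
      apply intervalIntegral.integral_congr
      intro u hu
      rw [Set.uIcc_of_le hh0.le] at hu
      have hu0 : 0 ≤ u := hu.1
      show Real.sqrt (2 * u / A) ^ m = Real.sqrt (2 / A) ^ m * u ^ p
      rw [show 2 * u / A = (2 / A) * u by ring, Real.sqrt_mul (by positivity) u, mul_pow,
        Real.sqrt_eq_rpow u, ← Real.rpow_natCast (u ^ ((1:ℝ)/2)) m, ← Real.rpow_mul hu0,
        show (1:ℝ)/2 * (m:ℕ) = p by rw [hp]; ring]
    rw [hcong, intervalIntegral.integral_const_mul,
      integral_rpow (Or.inl (by linarith : (-1:ℝ) < p)),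
      Real.zero_rpow (by positivity : (0:ℝ) < p + 1).ne']
    ring
  rw [hintval]
  -- final arithmetic
  have hP : (∏ i ∈ Finset.univ.erase (Fin.last m), a i) = C := by
    apply mul_right_cancel₀ hA0.ne'
    rw [Finset.prod_erase_mul _ _ (Finset.mem_univ _), hC, hA,
      Fin.prod_univ_castSucc (f := a)]
  rw [hP]
  conv_lhs => rw [← ENNReal.ofReal_toReal hBfin]
  rw [← ENNReal.ofReal_mul (by positivity)]
  apply ENNReal.ofReal_le_ofReal
  apply le_of_eq
  have hsq : Real.sqrt (2 / A) ^ m = 2 ^ p / A ^ p := by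
    rw [Real.sqrt_eq_rpow, ← Real.rpow_natCast ((2/A) ^ ((1:ℝ)/2)) m,
      ← Real.rpow_mul (by positivity), show (1:ℝ)/2 * (m:ℕ) = p by rw [hp]; ring,
      Real.div_rpow (by norm_num) hA0.le]
  have hexp1 : ((m : ℝ) + 1 + 1) / 2 = p + 1 := by rw [hp]; ring
  have hexp2 : ((m : ℝ) + 1 - 1) / 2 = p := by rw [hp]; ring
  push_cast
  rw [hexp1, hexp2, hsq, Real.rpow_add two_pos p 1, Real.rpow_one]
  have hAp : 0 < A ^ p := Real.rpow_pos_of_pos hA0 p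
  have hp1 : (0:ℝ) < p + 1 := by positivity
  have hm2 : ((m : ℝ) + 1 + 1) ≠ 0 := by positivity
  have hrel : 2 * (p + 1) = (m : ℝ) + 1 + 1 := by rw [hp]; ring
  rw [← hrel]
  field_simp
end

section
/- Let ψ : ℝⁿ → ℝ be convex with epigraph epi(ψ) ⊆ ℝ^{n+1}, and let δ > 0 be small enough that the floating set (epi(ψ))_δ is nonempty. Then there exists a unique convex function ψ_δ : ℝⁿ → ℝ with (epi(ψ))_δ = epi(ψ_δ), and ψ_δ ≥ ψ pointwise. -/
open MeasureTheory RealInnerProductSpace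

/-- The floating set `C_δ` of a closed convex set `C ⊆ ℝ^{n+1}`. -/
def floatingSet {m : ℕ} (C : Set (EuclideanSpace ℝ (Fin m))) (δ : ℝ) :
    Set (EuclideanSpace ℝ (Fin m)) :=
  ⋂₀ {S | ∃ (u : EuclideanSpace ℝ (Fin m)) (c : ℝ), ‖u‖ = 1 ∧
      S = {x | c ≤ ⟪x, u⟫} ∧
      volume ({x | ⟪x, u⟫ ≤ c} ∩ C) ≤ ENNReal.ofReal δ}

/-- The epigraph of `ψ : ℝⁿ → ℝ` viewed as a subset of `ℝ^{n+1}`;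
the first `n` coordinates are the argument and the last coordinate the height. -/
def epiSet {n : ℕ} (ψ : EuclideanSpace ℝ (Fin n) → ℝ) :
    Set (EuclideanSpace ℝ (Fin (n + 1))) :=
  {z | ψ (WithLp.toLp 2 (fun i : Fin n => z i.castSucc)) ≤ z (Fin.last n)}

/-! ### Auxiliary lemmas -/

lemma inner_eq_sum {m : ℕ} (z u : EuclideanSpace ℝ (Fin m)) : ⟪z, u⟫ = ∑ i, z i * u i := by
  simp [PiLp.inner_apply, RCLike.inner_apply, mul_comm]

lemma inner_split {n : ℕ} (z u : EuclideanSpace ℝ (Fin (n+1))) :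
    ⟪z, u⟫ = ∑ j : Fin n, z j.castSucc * u j.castSucc
      + z (Fin.last n) * u (Fin.last n) := by
  rw [inner_eq_sum, Fin.sum_univ_castSucc]

lemma volume_box {m : ℕ} (a b : Fin m → ℝ) :
    volume {z : EuclideanSpace ℝ (Fin m) | ∀ i, z i ∈ Set.Icc (a i) (b i)} =
      ∏ i, ENNReal.ofReal (b i - a i) := by
  have h : {z : EuclideanSpace ℝ (Fin m) | ∀ i, z i ∈ Set.Icc (a i) (b i)}
      = (MeasurableEquiv.toLp 2 (Fin m → ℝ)).symm ⁻¹'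
        (Set.univ.pi fun i => Set.Icc (a i) (b i)) := by
    ext z
    simp only [Set.mem_setOf_eq, Set.mem_preimage, Set.mem_univ_pi]
    rfl
  rw [h, (EuclideanSpace.volume_preserving_symm_measurableEquiv_toLp _).measure_preimage
    ((MeasurableSet.univ_pi fun i => measurableSet_Icc).nullMeasurableSet)]
  rw [volume_pi_pi]
  simp [Real.volume_Icc]

def projMap (n : ℕ) : EuclideanSpace ℝ (Fin (n+1)) →ₗ[ℝ] EuclideanSpace ℝ (Fin n) where
  toFun z := WithLp.toLp 2 (fun i : Fin n => z i.castSucc)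
  map_add' _ _ := rfl
  map_smul' _ _ := rfl

def lastMap (n : ℕ) : EuclideanSpace ℝ (Fin (n+1)) →ₗ[ℝ] ℝ where
  toFun z := z (Fin.last n)
  map_add' _ _ := rfl
  map_smul' _ _ := rfl

def piToE (n : ℕ) : (Fin n → ℝ) →ₗ[ℝ] EuclideanSpace ℝ (Fin n) where
  toFun z := WithLp.toLp 2 z
  map_add' _ _ := rfl
  map_smul' _ _ := rfl

lemma isClosed_epiSet {n : ℕ} {ψ : EuclideanSpace ℝ (Fin n) → ℝ} (hψ : Continuous ψ) :
    IsClosed (epiSet ψ) :=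
  isClosed_le (hψ.comp (projMap n).continuous_of_finiteDimensional)
    (lastMap n).continuous_of_finiteDimensional

lemma convex_epiSet {n : ℕ} {ψ : EuclideanSpace ℝ (Fin n) → ℝ}
    (hconv : ConvexOn ℝ Set.univ ψ) : Convex ℝ (epiSet ψ) := by
  intro z hz w hw a b ha hb hab
  simp only [epiSet, Set.mem_setOf_eq] at hz hw ⊢
  have h1 : (WithLp.toLp 2 (fun i : Fin n => (a • z + b • w) i.castSucc))
      = a • (WithLp.toLp 2 fun i : Fin n => z i.castSucc)
        + b • (WithLp.toLp 2 fun i : Fin n => w i.castSucc) := rfl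
  rw [h1]
  calc ψ _ ≤ a • ψ (WithLp.toLp 2 fun i : Fin n => z i.castSucc) + b • ψ (WithLp.toLp 2 fun i : Fin n => w i.castSucc) :=
        hconv.2 (Set.mem_univ _) (Set.mem_univ _) ha hb hab
    _ ≤ a • z (Fin.last n) + b • w (Fin.last n) := by
        simp only [smul_eq_mul]
        have := mul_le_mul_of_nonneg_left hz ha
        have := mul_le_mul_of_nonneg_left hw hb
        linarith
    _ = (a • z + b • w) (Fin.last n) := rfl

lemma bdd_above_on_box {n : ℕ} {ψ : EuclideanSpace ℝ (Fin n) → ℝ} (hψ : Continuous ψ)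
    (lo hi : Fin n → ℝ) :
    ∃ M : ℝ, ∀ y : EuclideanSpace ℝ (Fin n),
      (∀ j, y j ∈ Set.Icc (lo j) (hi j)) → ψ y ≤ M := by
  have hK : IsCompact ((piToE n) '' Set.univ.pi fun j => Set.Icc (lo j) (hi j)) :=
    (isCompact_univ_pi fun j => isCompact_Icc).image
      (piToE n).continuous_of_finiteDimensional
  obtain ⟨M, hM⟩ := hK.bddAbove_image hψ.continuousOn
  exact ⟨M, fun y hy => hM ⟨y, ⟨y, fun j _ => hy j, rfl⟩, rfl⟩⟩

lemma cut_volume_lb {n : ℕ} (ψ : EuclideanSpace ℝ (Fin n) → ℝ)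
    (u : EuclideanSpace ℝ (Fin (n+1))) (c : ℝ) (lo : Fin n → ℝ) (T L : ℝ)
    (hcut : ∀ z : EuclideanSpace ℝ (Fin (n+1)),
      (∀ i : Fin n, z i.castSucc ∈ Set.Icc (lo i) (lo i + 1)) →
      z (Fin.last n) ∈ Set.Icc T (T + L) →
      ⟪z, u⟫ ≤ c ∧ ψ (WithLp.toLp 2 fun i : Fin n => z i.castSucc) ≤ z (Fin.last n)) :
    ENNReal.ofReal L ≤ volume ({z : EuclideanSpace ℝ (Fin (n+1)) | ⟪z, u⟫ ≤ c} ∩ epiSet ψ) := by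
  set a : Fin (n+1) → ℝ := Fin.lastCases T lo with ha
  set b : Fin (n+1) → ℝ := Fin.lastCases (T + L) (fun i => lo i + 1) with hb
  have hsub : {z : EuclideanSpace ℝ (Fin (n+1)) | ∀ i, z i ∈ Set.Icc (a i) (b i)}
      ⊆ {z : EuclideanSpace ℝ (Fin (n+1)) | ⟪z, u⟫ ≤ c} ∩ epiSet ψ := by
    intro z hz
    have h1 : ∀ i : Fin n, z i.castSucc ∈ Set.Icc (lo i) (lo i + 1) := by
      intro i
      have := hz i.castSucc
      simpa [ha, hb, Fin.lastCases_castSucc] using this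
    have h2 : z (Fin.last n) ∈ Set.Icc T (T + L) := by
      have := hz (Fin.last n)
      simpa [ha, hb, Fin.lastCases_last] using this
    exact (hcut z h1 h2).imp id id
  calc ENNReal.ofReal L
      = volume {z : EuclideanSpace ℝ (Fin (n+1)) | ∀ i, z i ∈ Set.Icc (a i) (b i)} := by
        rw [volume_box, Fin.prod_univ_castSucc]
        simp [ha, hb, Fin.lastCases_castSucc, Fin.lastCases_last]
    _ ≤ _ := measure_mono hsub

lemma snoc_proj {n : ℕ} (x : EuclideanSpace ℝ (Fin n)) (t : ℝ) :
    (WithLp.toLp 2 fun i : Fin n => (WithLp.toLp 2 (Fin.snoc (α := fun _ : Fin (n+1) => ℝ) (WithLp.ofLp (x : EuclideanSpace ℝ (Fin n))) t) : EuclideanSpace ℝ (Fin (n+1))) i.castSucc) = x := by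
  rw [WithLp.ext_iff]; funext i; simp [Fin.snoc_castSucc]

lemma snoc_last' {n : ℕ} (x : EuclideanSpace ℝ (Fin n)) (t : ℝ) :
    (WithLp.toLp 2 (Fin.snoc (α := fun _ : Fin (n+1) => ℝ) (WithLp.ofLp (x : EuclideanSpace ℝ (Fin n))) t) : EuclideanSpace ℝ (Fin (n+1))) (Fin.last n) = t := by
  simp [Fin.snoc_last]

lemma snoc_mem_epi_iff {n : ℕ} {ψ : EuclideanSpace ℝ (Fin n) → ℝ} (x : EuclideanSpace ℝ (Fin n))
    (t : ℝ) : (WithLp.toLp 2 (Fin.snoc (α := fun _ : Fin (n+1) => ℝ) (WithLp.ofLp (x : EuclideanSpace ℝ (Fin n))) t) : EuclideanSpace ℝ (Fin (n+1))) ∈ epiSet ψ ↔ ψ x ≤ t := by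
  show (ψ <| WithLp.toLp 2 fun i : Fin n => (WithLp.toLp 2 (Fin.snoc (α := fun _ : Fin (n+1) => ℝ) (WithLp.ofLp (x : EuclideanSpace ℝ (Fin n))) t) : EuclideanSpace ℝ (Fin (n+1))) i.castSucc) ≤
      (WithLp.toLp 2 (Fin.snoc (α := fun _ : Fin (n+1) => ℝ) (WithLp.ofLp (x : EuclideanSpace ℝ (Fin n))) t) : EuclideanSpace ℝ (Fin (n+1))) (Fin.last n) ↔ ψ x ≤ t
  rw [snoc_proj, snoc_last']

lemma sep_of_not_mem {n : ℕ} {ψ : EuclideanSpace ℝ (Fin n) → ℝ}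
    (hcl : IsClosed (epiSet ψ)) (hcv : Convex ℝ (epiSet ψ))
    (w : EuclideanSpace ℝ (Fin (n+1))) (hw : w ∉ epiSet ψ) :
    ∃ (u : EuclideanSpace ℝ (Fin (n+1))) (c : ℝ), ‖u‖ = 1 ∧
      ({z : EuclideanSpace ℝ (Fin (n+1)) | ⟪z, u⟫ ≤ c} ∩ epiSet ψ) = ∅ ∧ ⟪w, u⟫ < c := by
  obtain ⟨f, s, hfs, hsw⟩ := geometric_hahn_banach_closed_point hcv hcl hw
  set v : EuclideanSpace ℝ (Fin (n+1)) :=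
    (InnerProductSpace.toDual ℝ (EuclideanSpace ℝ (Fin (n+1)))).symm f with hvdef
  have hv : ∀ y, ⟪v, y⟫ = f y := fun y => InnerProductSpace.toDual_symm_apply
  have hpt : (WithLp.toLp 2 (Fin.snoc (α := fun _ : Fin (n+1) => ℝ) (WithLp.ofLp (0 : EuclideanSpace ℝ (Fin n))) (ψ 0)) : EuclideanSpace ℝ (Fin (n+1))) ∈ epiSet ψ :=
    (snoc_mem_epi_iff 0 (ψ 0)).mpr le_rfl
  have hvne : v ≠ 0 := by
    intro h0
    have h1 := hfs _ hpt
    have h2 : ∀ y, f y = 0 := by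
      intro y; rw [← hv y, h0, inner_zero_left]
    rw [h2] at h1
    rw [h2] at hsw
    linarith
  have hnv : (0:ℝ) < ‖v‖ := norm_pos_iff.mpr hvne
  have hneg : -‖v‖⁻¹ < 0 := by have := inv_pos.mpr hnv; linarith
  refine ⟨(-‖v‖⁻¹) • v, -‖v‖⁻¹ * s, ?_, ?_, ?_⟩
  · rw [norm_smul]
    simp [abs_of_nonneg (le_of_lt (inv_pos.mpr hnv)), inv_mul_cancel₀ (ne_of_gt hnv)]
  · rw [Set.eq_empty_iff_forall_notMem]
    rintro z ⟨hz1, hz2⟩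
    have hzi : ⟪z, (-‖v‖⁻¹) • v⟫ = -‖v‖⁻¹ * f z := by
      rw [real_inner_smul_right, real_inner_comm, hv]
    rw [Set.mem_setOf_eq, hzi] at hz1
    have hfz : f z < s := hfs z hz2
    nlinarith
  · have hwi : ⟪w, (-‖v‖⁻¹) • v⟫ = -‖v‖⁻¹ * f w := by
      rw [real_inner_smul_right, real_inner_comm, hv]
    rw [hwi]
    nlinarith

lemma last_pos {n : ℕ} {ψ : EuclideanSpace ℝ (Fin n) → ℝ} (hψ : Continuous ψ)
    {δ : ℝ} (hδ : 0 ≤ δ) (u : EuclideanSpace ℝ (Fin (n+1))) (c : ℝ) (hu : ‖u‖ = 1)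
    (hvol : volume ({z : EuclideanSpace ℝ (Fin (n+1)) | ⟪z, u⟫ ≤ c} ∩ epiSet ψ)
      ≤ ENNReal.ofReal δ) : 0 < u (Fin.last n) := by
  by_contra hle
  push_neg at hle
  set s := ∑ j : Fin n, |u j.castSucc| with hsdef
  have hcontra : ∀ lo : Fin n → ℝ, ∀ T : ℝ,
      (∀ z : EuclideanSpace ℝ (Fin (n+1)),
        (∀ i : Fin n, z i.castSucc ∈ Set.Icc (lo i) (lo i + 1)) →
        z (Fin.last n) ∈ Set.Icc T (T + (δ+1)) →
        ⟪z, u⟫ ≤ c ∧ ψ (WithLp.toLp 2 fun i : Fin n => z i.castSucc) ≤ z (Fin.last n)) → False := by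
    intro lo T hcut
    have h1 := (cut_volume_lb ψ u c lo T (δ+1) hcut).trans hvol
    rw [ENNReal.ofReal_le_ofReal_iff hδ] at h1
    linarith
  by_cases hs : s = 0
  · have hz : ∀ j : Fin n, u j.castSucc = 0 := by
      intro j
      have := (Finset.sum_eq_zero_iff_of_nonneg (fun i _ => abs_nonneg (u i.castSucc))).mp hs
      exact abs_eq_zero.mp (this j (Finset.mem_univ j))
    have hul : u (Fin.last n) = -1 := by
      have hnorm : ∑ i, u i ^ 2 = 1 := by
        have h2 : ‖u‖ ^ 2 = 1 := by rw [hu]; norm_num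
        rw [EuclideanSpace.norm_eq] at h2
        rw [Real.sq_sqrt (by positivity)] at h2
        simpa [Real.norm_eq_abs, sq_abs] using h2
      rw [Fin.sum_univ_castSucc] at hnorm
      have hzz : ∑ j : Fin n, u j.castSucc ^ 2 = 0 := by
        apply Finset.sum_eq_zero; intro j _; rw [hz j]; ring
      rw [hzz, zero_add] at hnorm
      nlinarith
    obtain ⟨M, hM⟩ := bdd_above_on_box hψ (fun _ => 0) (fun _ => (0:ℝ) + 1)
    apply hcontra (fun _ => 0) (max M (-c))
    intro z hz1 hz2
    constructor
    · rw [inner_eq_sum, Fin.sum_univ_castSucc]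
      have hzero : ∑ j : Fin n, z j.castSucc * u j.castSucc = 0 := by
        apply Finset.sum_eq_zero; intro j _; rw [hz j]; ring
      rw [hzero, zero_add, hul]
      have h3 : max M (-c) ≤ z (Fin.last n) := hz2.1
      have h4 : -c ≤ max M (-c) := le_max_right _ _
      linarith
    · have h5 : ψ (WithLp.toLp 2 fun i : Fin n => z i.castSucc) ≤ M := hM _ hz1
      have h3 : max M (-c) ≤ z (Fin.last n) := hz2.1
      have h4 : M ≤ max M (-c) := le_max_left _ _
      linarith
  · have hspos : 0 < s := lt_of_le_of_ne (Finset.sum_nonneg fun i _ => abs_nonneg _) (Ne.symm hs)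
    set R := |c| / s with hRdef
    have hRs : R * s = |c| := div_mul_cancel₀ _ (ne_of_gt hspos)
    set lo : Fin n → ℝ := fun j => if 0 ≤ u j.castSucc then -R - 1 else R with hlodef
    obtain ⟨M, hM⟩ := bdd_above_on_box hψ lo (fun j => lo j + 1)
    apply hcontra lo (max M 0)
    intro z hz1 hz2
    constructor
    · rw [inner_eq_sum, Fin.sum_univ_castSucc]
      have hterm : ∀ j : Fin n, z j.castSucc * u j.castSucc ≤ -R * |u j.castSucc| := by
        intro j
        have hj := hz1 j
        by_cases h : 0 ≤ u j.castSucc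
        · have hub : z j.castSucc ≤ -R := by
            have := hj.2; simp only [hlodef, if_pos h] at this ⊢; linarith
          have := mul_le_mul_of_nonneg_right hub h
          rwa [abs_of_nonneg h]
        · push_neg at h
          have hlb : R ≤ z j.castSucc := by
            have := hj.1; simp only [hlodef, if_neg (not_le.mpr h)] at this; linarith
          have := mul_le_mul_of_nonpos_right hlb (le_of_lt h)
          rw [abs_of_neg h]; nlinarith
      have hsum : ∑ j : Fin n, z j.castSucc * u j.castSucc ≤ -R * s := by
        rw [hsdef, Finset.mul_sum]
        exact Finset.sum_le_sum fun j _ => hterm j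
      have ht : z (Fin.last n) * u (Fin.last n) ≤ 0 := by
        apply mul_nonpos_of_nonneg_of_nonpos _ hle
        have h3 : max M 0 ≤ z (Fin.last n) := hz2.1
        have h4 : (0:ℝ) ≤ max M 0 := le_max_right _ _
        linarith
      have habs : -R * s ≤ c := by
        have h7 : -(R*s) = -|c| := by rw [hRs]
        have h6 : -|c| ≤ c := neg_abs_le c
        nlinarith
      linarith
    · have h5 : ψ (WithLp.toLp 2 fun i : Fin n => z i.castSucc) ≤ M := hM _ hz1
      have h3 : max M 0 ≤ z (Fin.last n) := hz2.1
      have h4 : M ≤ max M 0 := le_max_left _ _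
      linarith

lemma ell_bound {n : ℕ} {ψ : EuclideanSpace ℝ (Fin n) → ℝ} (hψ : Continuous ψ)
    {δ : ℝ} (hδ : 0 ≤ δ) (x : EuclideanSpace ℝ (Fin n)) :
    ∃ B : ℝ, ∀ (u : EuclideanSpace ℝ (Fin (n+1))) (c : ℝ), ‖u‖ = 1 →
      volume ({z : EuclideanSpace ℝ (Fin (n+1)) | ⟪z, u⟫ ≤ c} ∩ epiSet ψ)
        ≤ ENNReal.ofReal δ →
      (c - ∑ i, x i * u i.castSucc) / u (Fin.last n) ≤ B := by
  obtain ⟨M, hM⟩ := bdd_above_on_box hψ (fun j => x j - 1) (fun j => x j + 1)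
  refine ⟨M + δ, fun u c hu hvol => ?_⟩
  have hlast := last_pos hψ hδ u c hu hvol
  by_contra hgt
  push_neg at hgt
  set ℓx := (c - ∑ i, x i * u i.castSucc) / u (Fin.last n) with hlxdef
  have hml : ℓx * u (Fin.last n) = c - ∑ i, x i * u i.castSucc :=
    div_mul_cancel₀ _ (ne_of_gt hlast)
  have key := cut_volume_lb ψ u c (fun j => if 0 ≤ u j.castSucc then x j - 1 else x j)
    M (ℓx - M) ?_
  · have h1 := key.trans hvol
    rw [ENNReal.ofReal_le_ofReal_iff hδ] at h1
    linarith
  · intro z hz1 hz2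
    have hzt : z (Fin.last n) ≤ ℓx := by
      have := hz2.2; linarith
    have hbox : ∀ j : Fin n, z j.castSucc ∈ Set.Icc (x j - 1) (x j + 1) := by
      intro j
      have hj := hz1 j
      by_cases h : 0 ≤ u j.castSucc
      · simp only [if_pos h] at hj; exact ⟨by linarith [hj.1], by linarith [hj.2]⟩
      · simp only [if_neg h] at hj; exact ⟨by linarith [hj.1], by linarith [hj.2]⟩
    constructor
    · rw [inner_eq_sum, Fin.sum_univ_castSucc]
      have hterm : ∀ j : Fin n, z j.castSucc * u j.castSucc ≤ x j * u j.castSucc := by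
        intro j
        have hj := hz1 j
        by_cases h : 0 ≤ u j.castSucc
        · have hub : z j.castSucc ≤ x j := by
            have := hj.2; simp only [if_pos h] at this; linarith
          exact mul_le_mul_of_nonneg_right hub h
        · push_neg at h
          have hlb : x j ≤ z j.castSucc := by
            have := hj.1; simp only [if_neg (not_le.mpr h)] at this; linarith
          exact mul_le_mul_of_nonpos_right hlb (le_of_lt h)
      have hsum : ∑ j : Fin n, z j.castSucc * u j.castSucc ≤ ∑ j : Fin n, x j * u j.castSucc :=
        Finset.sum_le_sum fun j _ => hterm j
      have ht : z (Fin.last n) * u (Fin.last n) ≤ ℓx * u (Fin.last n) :=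
        mul_le_mul_of_nonneg_right hzt (le_of_lt hlast)
      linarith
    · have h5 : ψ (WithLp.toLp 2 fun i : Fin n => z i.castSucc) ≤ M := hM _ hbox
      have h3 : M ≤ z (Fin.last n) := hz2.1
      linarith

/-- If `(epi ψ)_δ` is nonempty, there is a unique convex function `ψ_δ : ℝⁿ → ℝ` with
`(epi ψ)_δ = epi ψ_δ`, and `ψ_δ ≥ ψ` pointwise. -/
theorem exists_unique_floating_function
    (n : ℕ) (ψ : EuclideanSpace ℝ (Fin n) → ℝ)
    (hconv : ConvexOn ℝ Set.univ ψ)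
    (δ : ℝ) (hδ : 0 < δ)
    (hne : (floatingSet (epiSet ψ) δ).Nonempty) :
    ∃! φ : EuclideanSpace ℝ (Fin n) → ℝ,
      ConvexOn ℝ Set.univ φ ∧ epiSet φ = floatingSet (epiSet ψ) δ ∧ ∀ x, ψ x ≤ φ x := by
  have hδ0 : 0 ≤ δ := hδ.le
  have hψc : Continuous ψ :=
    continuousOn_univ.mp (hconv.continuousOn isOpen_univ)
  have hcl := isClosed_epiSet (ψ := ψ) hψc
  have hcv := convex_epiSet hconv
  set A : EuclideanSpace ℝ (Fin n) → Set ℝ := fun x =>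
    {r | ∃ (u : EuclideanSpace ℝ (Fin (n+1))) (c : ℝ), ‖u‖ = 1 ∧
      volume ({z : EuclideanSpace ℝ (Fin (n+1)) | ⟪z, u⟫ ≤ c} ∩ epiSet ψ)
        ≤ ENNReal.ofReal δ ∧
      r = (c - ∑ i, x i * u i.castSucc) / u (Fin.last n)} with hA
  have hbdd : ∀ x, BddAbove (A x) := by
    intro x
    obtain ⟨B, hB⟩ := ell_bound hψc hδ0 x
    exact ⟨B, fun r hr => by obtain ⟨u, c, hu, hv, rfl⟩ := hr; exact hB u c hu hv⟩
  have hAne : ∀ x, (A x).Nonempty := by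
    intro x
    have hwns : (WithLp.toLp 2 (Fin.snoc (α := fun _ : Fin (n+1) => ℝ) (WithLp.ofLp (x : EuclideanSpace ℝ (Fin n))) (ψ x - 1)) : EuclideanSpace ℝ (Fin (n+1))) ∉ epiSet ψ := by
      rw [snoc_mem_epi_iff]; linarith
    obtain ⟨u, c, hu, hem, _⟩ := sep_of_not_mem hcl hcv _ hwns
    exact ⟨_, u, c, hu, by rw [hem]; simp, rfl⟩
  set φ : EuclideanSpace ℝ (Fin n) → ℝ := fun x => sSup (A x) with hφ
  have hmemF : ∀ z : EuclideanSpace ℝ (Fin (n+1)), z ∈ floatingSet (epiSet ψ) δ ↔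
      ∀ (u : EuclideanSpace ℝ (Fin (n+1))) (c : ℝ), ‖u‖ = 1 →
        volume ({z' : EuclideanSpace ℝ (Fin (n+1)) | ⟪z', u⟫ ≤ c} ∩ epiSet ψ)
          ≤ ENNReal.ofReal δ → c ≤ ⟪z, u⟫ := by
    intro z
    constructor
    · intro h u c hu hv
      exact h {x | c ≤ ⟪x, u⟫} ⟨u, c, hu, rfl, hv⟩
    · rintro h S ⟨u, c, hu, rfl, hv⟩
      exact h u c hu hv
  have hepiF : epiSet φ = floatingSet (epiSet ψ) δ := by
    ext z
    rw [hmemF]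
    show φ (WithLp.toLp 2 fun i : Fin n => z i.castSucc) ≤ z (Fin.last n) ↔ _
    rw [hφ]
    rw [csSup_le_iff (hbdd _) (hAne _)]
    constructor
    · intro h u c hu hv
      have hl := h _ ⟨u, c, hu, hv, rfl⟩
      have hlast := last_pos hψc hδ0 u c hu hv
      rw [div_le_iff₀ hlast] at hl
      rw [inner_split]
      linarith
    · rintro h r ⟨u, c, hu, hv, rfl⟩
      have hlast := last_pos hψc hδ0 u c hu hv
      rw [div_le_iff₀ hlast]
      have h2 := h u c hu hv
      rw [inner_split] at h2
      linarith
  have hφconv : ConvexOn ℝ Set.univ φ := by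
    refine ⟨convex_univ, ?_⟩
    intro x _ y _ a b ha hb hab
    apply csSup_le (hAne _)
    rintro r ⟨u, c, hu, hv, rfl⟩
    have h1 : (c - ∑ i, x i * u i.castSucc) / u (Fin.last n) ≤ φ x :=
      le_csSup (hbdd x) ⟨u, c, hu, hv, rfl⟩
    have h2 : (c - ∑ i, y i * u i.castSucc) / u (Fin.last n) ≤ φ y :=
      le_csSup (hbdd y) ⟨u, c, hu, hv, rfl⟩
    have hxy : ∀ i : Fin n, (a • x + b • y) i = a * x i + b * y i := fun i => rfl
    have hsum : ∑ i, (a • x + b • y) i * u i.castSucc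
        = a * ∑ i, x i * u i.castSucc + b * ∑ i, y i * u i.castSucc := by
      rw [Finset.mul_sum, Finset.mul_sum, ← Finset.sum_add_distrib]
      exact Finset.sum_congr rfl fun i _ => by rw [hxy i]; ring
    have hnum : c - ∑ i, (a • x + b • y) i * u i.castSucc
        = a * (c - ∑ i, x i * u i.castSucc) + b * (c - ∑ i, y i * u i.castSucc) := by
      rw [hsum]; linear_combination (-c) * hab
    calc (c - ∑ i, (a • x + b • y) i * u i.castSucc) / u (Fin.last n)
        = a * ((c - ∑ i, x i * u i.castSucc) / u (Fin.last n))
          + b * ((c - ∑ i, y i * u i.castSucc) / u (Fin.last n)) := by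
          rw [hnum]; ring
      _ ≤ a * φ x + b * φ y := add_le_add
          (mul_le_mul_of_nonneg_left h1 ha) (mul_le_mul_of_nonneg_left h2 hb)
      _ = a • φ x + b • φ y := rfl
  have hFsub : floatingSet (epiSet ψ) δ ⊆ epiSet ψ := by
    intro z hz
    by_contra hzn
    obtain ⟨u, c, hu, hem, hlt⟩ := sep_of_not_mem hcl hcv z hzn
    have := (hmemF z).mp hz u c hu (by rw [hem]; simp)
    linarith
  have hψφ : ∀ x, ψ x ≤ φ x := by
    intro x
    have hm : (WithLp.toLp 2 (Fin.snoc (α := fun _ : Fin (n+1) => ℝ) (WithLp.ofLp (x : EuclideanSpace ℝ (Fin n))) (φ x)) : EuclideanSpace ℝ (Fin (n+1))) ∈ epiSet φ :=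
      (snoc_mem_epi_iff _ _).mpr le_rfl
    rw [hepiF] at hm
    exact (snoc_mem_epi_iff x (φ x)).mp (hFsub hm)
  refine ⟨φ, ⟨hφconv, hepiF, hψφ⟩, ?_⟩
  rintro φ' ⟨_, hepi', _⟩
  funext x
  have e : epiSet φ' = epiSet φ := by rw [hepi', hepiF]
  have h1 : (WithLp.toLp 2 (Fin.snoc (α := fun _ : Fin (n+1) => ℝ) (WithLp.ofLp (x : EuclideanSpace ℝ (Fin n))) (φ' x)) : EuclideanSpace ℝ (Fin (n+1))) ∈ epiSet φ :=
    e ▸ (snoc_mem_epi_iff _ _).mpr le_rfl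
  have h2 : (WithLp.toLp 2 (Fin.snoc (α := fun _ : Fin (n+1) => ℝ) (WithLp.ofLp (x : EuclideanSpace ℝ (Fin n))) (φ x)) : EuclideanSpace ℝ (Fin (n+1))) ∈ epiSet φ' :=
    e.symm ▸ (snoc_mem_epi_iff _ _).mpr le_rfl
  exact le_antisymm ((snoc_mem_epi_iff _ _).mp h2) ((snoc_mem_epi_iff _ _).mp h1)
end

section
/- For a log concave function f = e^{-ψ} with ψ : ℝⁿ → ℝ twice differentiable convex, and an affine map A : ℝⁿ → ℝⁿ with det A ≠ 0, the affine surface area as(f) = ∫_{ℝⁿ} (det ∇²ψ(x))^{1/(n+2)} e^{-ψ(x)} dx satisfies as(f ∘ A) = |det A|^{-n/(n+2)} as(f). -/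
open MeasureTheory

/-- The determinant of the (generalized) Hessian `∇²ψ(x)`, defined as the determinant of the
derivative of the gradient of `ψ`. -/
noncomputable def hessianDet {n : ℕ} (ψ : EuclideanSpace ℝ (Fin n) → ℝ)
    (x : EuclideanSpace ℝ (Fin n)) : ℝ :=
  LinearMap.det ((fderiv ℝ (gradient ψ) x :
    EuclideanSpace ℝ (Fin n) →L[ℝ] EuclideanSpace ℝ (Fin n)) :
      EuclideanSpace ℝ (Fin n) →ₗ[ℝ] EuclideanSpace ℝ (Fin n))

section AuxLemmas

open scoped RealInnerProductSpace

variable {n : ℕ}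

/-- The inverse of `InnerProductSpace.toDual` over `ℝ`, as a genuine continuous
`ℝ`-linear map. -/
noncomputable def dualIso (n : ℕ) :
    StrongDual ℝ (EuclideanSpace ℝ (Fin n)) →L[ℝ] EuclideanSpace ℝ (Fin n) where
  toLinearMap :=
    { toFun := fun φ => (InnerProductSpace.toDual ℝ (EuclideanSpace ℝ (Fin n))).symm φ
      map_add' := fun φ ρ => by simp
      map_smul' := fun c φ => by simp }
  cont := (InnerProductSpace.toDual ℝ (EuclideanSpace ℝ (Fin n))).symm.continuous

lemma gradient_eq_dualIso (ψ : EuclideanSpace ℝ (Fin n) → ℝ) :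
    gradient ψ = fun x => dualIso n (fderiv ℝ ψ x) := rfl

lemma inner_dualIso (φ : StrongDual ℝ (EuclideanSpace ℝ (Fin n)))
    (v : EuclideanSpace ℝ (Fin n)) : ⟪dualIso n φ, v⟫ = φ v :=
  InnerProductSpace.toDual_symm_apply

lemma gradient_differentiable {ψ : EuclideanSpace ℝ (Fin n) → ℝ} (hsm : ContDiff ℝ 2 ψ) :
    Differentiable ℝ (gradient ψ) := by
  have h1 : Differentiable ℝ (fderiv ℝ ψ) := (hsm.fderiv_right (m := 1) (by norm_num)).differentiable one_ne_zero
  rw [gradient_eq_dualIso]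
  exact ((dualIso n).differentiable).comp h1

lemma fderiv_gradient_eq {ψ : EuclideanSpace ℝ (Fin n) → ℝ} (hsm : ContDiff ℝ 2 ψ)
    (x : EuclideanSpace ℝ (Fin n)) :
    (fderiv ℝ (gradient ψ) x : EuclideanSpace ℝ (Fin n) →L[ℝ] EuclideanSpace ℝ (Fin n)) =
      (dualIso n).comp (fderiv ℝ (fderiv ℝ ψ) x) := by
  have h1 : Differentiable ℝ (fderiv ℝ ψ) := (hsm.fderiv_right (m := 1) (by norm_num)).differentiable one_ne_zero
  rw [gradient_eq_dualIso]
  exact (((dualIso n).hasFDerivAt).comp x (h1 x).hasFDerivAt).fderiv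

lemma det_adjoint (f : EuclideanSpace ℝ (Fin n) →ₗ[ℝ] EuclideanSpace ℝ (Fin n)) :
    LinearMap.det (LinearMap.adjoint f) = LinearMap.det f := by
  rw [← LinearMap.det_toMatrix (EuclideanSpace.basisFun (Fin n) ℝ).toBasis,
    ← LinearMap.det_toMatrix (EuclideanSpace.basisFun (Fin n) ℝ).toBasis f,
    LinearMap.toMatrix_adjoint, Matrix.det_conjTranspose]
  simp

lemma inner_gradient (ψ : EuclideanSpace ℝ (Fin n) → ℝ) (p v : EuclideanSpace ℝ (Fin n)) :
    ⟪gradient ψ p, v⟫ = fderiv ℝ ψ p v :=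
  InnerProductSpace.toDual_symm_apply

lemma gradient_comp_affine (ψ : EuclideanSpace ℝ (Fin n) → ℝ) (hψ : Differentiable ℝ ψ)
    (L : EuclideanSpace ℝ (Fin n) →L[ℝ] EuclideanSpace ℝ (Fin n)) (b : EuclideanSpace ℝ (Fin n)) :
    gradient (fun y => ψ (L y + b)) =
      fun x => ContinuousLinearMap.adjoint L (gradient ψ (L x + b)) := by
  funext x
  have hA : HasFDerivAt (fun y => L y + b) L x := L.hasFDerivAt.add_const b
  have hcomp : HasFDerivAt (fun y => ψ (L y + b)) ((fderiv ℝ ψ (L x + b)).comp L) x :=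
    (hψ (L x + b)).hasFDerivAt.comp x hA
  have hfd : fderiv ℝ (fun y => ψ (L y + b)) x = (fderiv ℝ ψ (L x + b)).comp L := hcomp.fderiv
  apply ext_inner_right ℝ
  intro v
  rw [show gradient (fun y => ψ (L y + b)) x
      = (InnerProductSpace.toDual ℝ (EuclideanSpace ℝ (Fin n))).symm
        (fderiv ℝ (fun y => ψ (L y + b)) x) from rfl, hfd,
    InnerProductSpace.toDual_symm_apply, ContinuousLinearMap.adjoint_inner_left]
  rw [inner_gradient]
  rfl

lemma hessian_symm {ψ : EuclideanSpace ℝ (Fin n) → ℝ} (hsm : ContDiff ℝ 2 ψ)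
    (x v w : EuclideanSpace ℝ (Fin n)) :
    ⟪fderiv ℝ (gradient ψ) x v, w⟫ = ⟪fderiv ℝ (gradient ψ) x w, v⟫ := by
  have hd : Differentiable ℝ ψ := hsm.differentiable (by norm_num)
  have h1 : Differentiable ℝ (fderiv ℝ ψ) := (hsm.fderiv_right (m := 1) (by norm_num)).differentiable one_ne_zero
  have hsymm := second_derivative_symmetric (f := ψ) (f' := fderiv ℝ ψ)
    (f'' := fderiv ℝ (fderiv ℝ ψ) x) (fun y => (hd y).hasFDerivAt) (h1 x).hasFDerivAt v w
  rw [fderiv_gradient_eq hsm]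
  simp only [ContinuousLinearMap.comp_apply, inner_dualIso]
  exact hsymm

lemma hessian_inner_nonneg {ψ : EuclideanSpace ℝ (Fin n) → ℝ}
    (hconv : ConvexOn ℝ Set.univ ψ) (hsm : ContDiff ℝ 2 ψ)
    (x v : EuclideanSpace ℝ (Fin n)) :
    0 ≤ ⟪v, fderiv ℝ (gradient ψ) x v⟫ := by
  have hd : Differentiable ℝ ψ := hsm.differentiable (by norm_num)
  have hgd : Differentiable ℝ (gradient ψ) := gradient_differentiable hsm
  set g : ℝ → ℝ := fun t => ψ (x + t • v) with hgdef
  set g' : ℝ → ℝ := fun t => ⟪v, gradient ψ (x + t • v)⟫ with hg'def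
  have hline : ∀ t : ℝ, HasDerivAt (fun s : ℝ => x + s • v) v t := by
    intro t
    simpa using ((hasDerivAt_id t).smul_const v).const_add x
  have hg' : ∀ t, HasDerivAt g (g' t) t := by
    intro t
    have h1 := (hd (x + t • v)).hasFDerivAt.comp_hasDerivAt t (hline t)
    refine h1.congr_deriv ?_
    symm
    show ⟪v, gradient ψ (x + t • v)⟫ = fderiv ℝ ψ (x + t • v) v
    rw [real_inner_comm]
    exact InnerProductSpace.toDual_symm_apply
  have hx0 : x + (0:ℝ) • v = x := by simp
  have hg'' : HasDerivAt g' ⟪v, fderiv ℝ (gradient ψ) x v⟫ 0 := by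
    have h2 : HasFDerivAt (gradient ψ) (fderiv ℝ (gradient ψ) x) (x + (0:ℝ) • v) := by
      rw [hx0]; exact (hgd x).hasFDerivAt
    have h3 := h2.comp_hasDerivAt 0 (hline 0)
    exact (innerSL ℝ v).hasFDerivAt.comp_hasDerivAt 0 h3
  have hgconv : ConvexOn ℝ Set.univ g := by
    have := hconv.comp_affineMap (AffineMap.lineMap x (x + v))
    have heq : (ψ ∘ (AffineMap.lineMap x (x + v))) = g := by
      funext t
      simp [AffineMap.lineMap_apply, hgdef]
      rw [add_comm]
    rw [heq] at this
    simpa using this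
  have hmono : Monotone g' := by
    have hdg : deriv g = g' := funext fun t => (hg' t).deriv
    have h5 := hgconv.monotoneOn_deriv (fun t _ => (hg' t).differentiableAt)
    intro a c hac
    have := h5 (Set.mem_univ a) (Set.mem_univ c) hac
    rwa [hdg] at this
  have h1 := hasDerivAt_iff_tendsto_slope.1 hg''
  have h2 : Filter.Tendsto (slope g' 0) (nhdsWithin 0 (Set.Ioi 0))
      (nhds ⟪v, fderiv ℝ (gradient ψ) x v⟫) :=
    h1.mono_left (nhdsWithin_mono _ (by intro s hs; simp at hs ⊢; exact ne_of_gt hs))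
  refine ge_of_tendsto h2 ?_
  filter_upwards [self_mem_nhdsWithin] with t ht
  simp only [Set.mem_Ioi] at ht
  rw [slope_def_field]
  apply div_nonneg
  · have := hmono ht.le; linarith
  · linarith

open Matrix in
lemma det_nonneg_of_symm_posdef (H : EuclideanSpace ℝ (Fin n) →ₗ[ℝ] EuclideanSpace ℝ (Fin n))
    (hsym : ∀ v w : EuclideanSpace ℝ (Fin n), ⟪H v, w⟫ = ⟪H w, v⟫)
    (hpos : ∀ v : EuclideanSpace ℝ (Fin n), 0 ≤ ⟪v, H v⟫) :
    0 ≤ LinearMap.det H := by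
  set b := (EuclideanSpace.basisFun (Fin n) ℝ).toBasis with hb
  set M := LinearMap.toMatrix b b H with hM
  have hHM : Matrix.toEuclideanLin M = H := by
    rw [Matrix.toEuclideanLin_eq_toLin_orthonormal, hM, hb, Matrix.toLin_toMatrix]
  have hMij : ∀ i j, M i j = ⟪(EuclideanSpace.single i (1:ℝ)), H (EuclideanSpace.single j 1)⟫ := by
    intro i j
    rw [hM, LinearMap.toMatrix_apply]
    simp [hb, EuclideanSpace.inner_single_left]
  have hherm : M.IsHermitian := by
    ext i j
    simp only [Matrix.conjTranspose_apply, star_trivial]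
    rw [hMij, hMij]
    rw [real_inner_comm, hsym]
    exact real_inner_comm _ _
  have hpsd : M.PosSemidef := by
    refine Matrix.PosSemidef.of_dotProduct_mulVec_nonneg hherm fun y => ?_
    have h1 : dotProduct (star y) (M *ᵥ y) =
        ⟪WithLp.toLp 2 y, WithLp.toLp 2 (M *ᵥ y)⟫ := by
      rw [EuclideanSpace.inner_toLp_toLp, dotProduct_comm]
    rw [h1, ← Matrix.toEuclideanLin_apply_piLp_toLp, hHM]
    exact hpos _
  have hdet : LinearMap.det H = M.det := (LinearMap.det_toMatrix b H).symm
  rw [hdet, hpsd.isHermitian.det_eq_prod_eigenvalues]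
  apply Finset.prod_nonneg
  intro i _
  simpa using hpsd.eigenvalues_nonneg i

lemma integral_comp_affine (G : EuclideanSpace ℝ (Fin n) → ℝ)
    (L : EuclideanSpace ℝ (Fin n) →L[ℝ] EuclideanSpace ℝ (Fin n))
    (b : EuclideanSpace ℝ (Fin n))
    (hdet : LinearMap.det (L : EuclideanSpace ℝ (Fin n) →ₗ[ℝ] EuclideanSpace ℝ (Fin n)) ≠ 0) :
    ∫ x, G (L x + b) =
      |LinearMap.det (L : EuclideanSpace ℝ (Fin n) →ₗ[ℝ] EuclideanSpace ℝ (Fin n))|⁻¹ *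
        ∫ y, G y := by
  set c := LinearMap.det (L : EuclideanSpace ℝ (Fin n) →ₗ[ℝ] EuclideanSpace ℝ (Fin n)) with hc
  have hdet' : L.det ≠ 0 := hdet
  set Leq := L.toContinuousLinearEquivOfDetNeZero hdet' with hLeq
  set e : EuclideanSpace ℝ (Fin n) ≃ᵐ EuclideanSpace ℝ (Fin n) :=
    (Leq.toHomeomorph.trans (Homeomorph.addRight b)).toMeasurableEquiv with he
  have hee : ∀ x, e x = L x + b := by
    intro x
    simp [he, hLeq]
  have hmap : Measure.map e (volume : Measure (EuclideanSpace ℝ (Fin n)))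
      = ENNReal.ofReal |c⁻¹| • volume := by
    have h1 : (e : EuclideanSpace ℝ (Fin n) → EuclideanSpace ℝ (Fin n))
        = (fun y => y + b) ∘ (fun x => L x) := by
      funext x; rw [hee]; rfl
    rw [show ⇑e = (fun y => y + b) ∘ (fun x => L x) from h1,
      ← Measure.map_map (measurable_add_const b) L.continuous.measurable]
    rw [show (⇑L : EuclideanSpace ℝ (Fin n) → EuclideanSpace ℝ (Fin n))
        = ⇑(L : EuclideanSpace ℝ (Fin n) →ₗ[ℝ] EuclideanSpace ℝ (Fin n)) from rfl,
      Measure.map_linearMap_addHaar_eq_smul_addHaar volume hdet]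
    rw [Measure.map_smul]
    congr 1
    exact map_add_right_eq_self volume b
  calc ∫ x, G (L x + b) = ∫ x, G (e x) := by simp_rw [hee]
    _ = ∫ y, G y ∂(Measure.map e volume) := (MeasureTheory.integral_map_equiv e G).symm
    _ = |c|⁻¹ * ∫ y, G y := by
        rw [hmap, integral_smul_measure]
        rw [ENNReal.toReal_ofReal (abs_nonneg _), abs_inv]
        rfl

end AuxLemmas

section MoreAux

variable {n : ℕ}

lemma hessianDet_nonneg {ψ : EuclideanSpace ℝ (Fin n) → ℝ}
    (hconv : ConvexOn ℝ Set.univ ψ) (hsm : ContDiff ℝ 2 ψ) (x : EuclideanSpace ℝ (Fin n)) :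
    0 ≤ hessianDet ψ x := by
  apply det_nonneg_of_symm_posdef
  · exact fun v w => hessian_symm hsm x v w
  · exact fun v => hessian_inner_nonneg hconv hsm x v

lemma hessianDet_comp_affine (ψ : EuclideanSpace ℝ (Fin n) → ℝ) (hsm : ContDiff ℝ 2 ψ)
    (L : EuclideanSpace ℝ (Fin n) →L[ℝ] EuclideanSpace ℝ (Fin n)) (b x : EuclideanSpace ℝ (Fin n)) :
    hessianDet (fun y => ψ (L y + b)) x =
      (LinearMap.det (L : EuclideanSpace ℝ (Fin n) →ₗ[ℝ] EuclideanSpace ℝ (Fin n)))^2 *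
        hessianDet ψ (L x + b) := by
  have hψ : Differentiable ℝ ψ := hsm.differentiable (by norm_num)
  have hgd : Differentiable ℝ (gradient ψ) := gradient_differentiable hsm
  have hgc := gradient_comp_affine ψ hψ L b
  have hA : HasFDerivAt (fun y => L y + b) L x := L.hasFDerivAt.add_const b
  have hfd : HasFDerivAt (fun x => ContinuousLinearMap.adjoint L (gradient ψ (L x + b)))
      ((ContinuousLinearMap.adjoint L).comp
        ((fderiv ℝ (gradient ψ) (L x + b)).comp L)) x :=
    ((ContinuousLinearMap.adjoint L).hasFDerivAt).comp x
      (by have h := ((hgd (L x + b)).hasFDerivAt).comp x hA; exact h)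
  have heq : fderiv ℝ (gradient (fun y => ψ (L y + b))) x
      = (ContinuousLinearMap.adjoint L).comp ((fderiv ℝ (gradient ψ) (L x + b)).comp L) := by
    rw [hgc]; exact hfd.fderiv
  rw [hessianDet, heq]
  rw [ContinuousLinearMap.toLinearMap_comp, ContinuousLinearMap.toLinearMap_comp, LinearMap.det_comp,
    LinearMap.det_comp]
  have hadj : ((ContinuousLinearMap.adjoint L : EuclideanSpace ℝ (Fin n) →L[ℝ]
      EuclideanSpace ℝ (Fin n)) : EuclideanSpace ℝ (Fin n) →ₗ[ℝ] EuclideanSpace ℝ (Fin n))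
      = LinearMap.adjoint (L : EuclideanSpace ℝ (Fin n) →ₗ[ℝ] EuclideanSpace ℝ (Fin n)) := rfl
  rw [hadj, det_adjoint]
  unfold hessianDet
  ring

end MoreAux

/-- Affine invariance of the affine surface area of a log concave function `f = e^{-ψ}`:
for an affine map `A x = L x + b` with `det L ≠ 0`,
`as(f ∘ A) = |det L|^{-n/(n+2)} as(f)`. -/
theorem affineSurfaceArea_comp_affine
    (n : ℕ) (ψ : EuclideanSpace ℝ (Fin n) → ℝ)
    (hconv : ConvexOn ℝ Set.univ ψ) (hsm : ContDiff ℝ 2 ψ)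
    (L : EuclideanSpace ℝ (Fin n) →L[ℝ] EuclideanSpace ℝ (Fin n))
    (b : EuclideanSpace ℝ (Fin n))
    (hdet : LinearMap.det (L : EuclideanSpace ℝ (Fin n) →ₗ[ℝ] EuclideanSpace ℝ (Fin n)) ≠ 0) :
    ∫ x, (hessianDet (fun y => ψ (L y + b)) x) ^ (1 / ((n : ℝ) + 2)) *
        Real.exp (-ψ (L x + b))
      = |LinearMap.det (L : EuclideanSpace ℝ (Fin n) →ₗ[ℝ] EuclideanSpace ℝ (Fin n))| ^
          (-(n : ℝ) / ((n : ℝ) + 2)) *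
        ∫ x, (hessianDet ψ x) ^ (1 / ((n : ℝ) + 2)) * Real.exp (-ψ x) := by
  set c := LinearMap.det (L : EuclideanSpace ℝ (Fin n) →ₗ[ℝ] EuclideanSpace ℝ (Fin n)) with hc
  have habs : (0:ℝ) < |c| := abs_pos.mpr hdet
  set p : ℝ := 1 / ((n : ℝ) + 2) with hp
  set G : EuclideanSpace ℝ (Fin n) → ℝ :=
    fun y => (hessianDet ψ y) ^ p * Real.exp (-ψ y) with hG
  have hpoint : ∀ x, (hessianDet (fun y => ψ (L y + b)) x) ^ p * Real.exp (-ψ (L x + b))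
      = |c| ^ (2 * p) * G (L x + b) := by
    intro x
    rw [hessianDet_comp_affine ψ hsm L b x, ← hc]
    rw [Real.mul_rpow (sq_nonneg c) (hessianDet_nonneg hconv hsm (L x + b))]
    have h2 : (c ^ 2) ^ p = |c| ^ (2 * p) := by
      rw [← sq_abs c, ← Real.rpow_natCast |c| 2, ← Real.rpow_mul (abs_nonneg c)]
      norm_num
    rw [h2, hG]
    ring
  have hn2 : ((n : ℝ) + 2) ≠ 0 := by positivity
  calc ∫ x, (hessianDet (fun y => ψ (L y + b)) x) ^ p * Real.exp (-ψ (L x + b))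
      = ∫ x, |c| ^ (2 * p) * G (L x + b) := by
        congr 1; funext x; exact hpoint x
    _ = |c| ^ (2 * p) * ∫ x, G (L x + b) := integral_const_mul _ _
    _ = |c| ^ (2 * p) * (|c|⁻¹ * ∫ y, G y) := by
        rw [integral_comp_affine G L b hdet]
    _ = |c| ^ (-(n : ℝ) / ((n : ℝ) + 2)) * ∫ y, G y := by
        rw [← mul_assoc]
        congr 1
        rw [← Real.rpow_neg_one |c|, ← Real.rpow_add habs]
        congr 1
        rw [hp]
        field_simp
        ring
end
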